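/- arXiv:2108.06308 — 7 statements merged into one kernel-verified Lean document; each statement's English description precedes it below -/
import Mathlib

section
/- Let (X,Z^k,T) be a Z^k-action on a compact metric space, 1 ≤ h ≤ k, and V an h-dimensional linear subspace of R^k. For r > √k/2 write mdim(X,T,V;r) = lim_{ε→0} liminf_{N→∞} Widim_ε(X, d^T_{B_r(V)∩[-N,N]^k}) / vol_h(V ∩ [-N,N]^k). Then for any r_1, r_2 > √k/2 one has mdim(X,T,V;r_1) = mdim(X,T,V;r_2); that is, the directional mean dimension is independent of the choice of r > √k/2. -/
open Set Filter Metric MeasureTheory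
open scoped ENNReal NNReal

noncomputable section

/-- `𝒰` is a finite open cover of `X`. -/
def IsFinOpenCover (X : Type) [TopologicalSpace X] (𝒰 : Set (Set X)) : Prop :=
  𝒰.Finite ∧ (∀ U ∈ 𝒰, IsOpen U) ∧ ⋃₀ 𝒰 = Set.univ

/-- `𝒰` is a finite closed cover of `X`. -/
def IsFinClosedCover (X : Type) [TopologicalSpace X] (𝒰 : Set (Set X)) : Prop :=
  𝒰.Finite ∧ (∀ U ∈ 𝒰, IsClosed U) ∧ ⋃₀ 𝒰 = Set.univ

/-- The order of a cover: `max_x (#{U ∈ 𝒰 | x ∈ U} - 1)`. -/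
def ordCover (X : Type) (𝒰 : Set (Set X)) : ℕ :=
  ⨆ x : X, ({U | U ∈ 𝒰 ∧ x ∈ U}.ncard - 1)

/-- The degree `D(𝒰)`: minimal order of a finite open cover refining `𝒰`. -/
def degCover (X : Type) [TopologicalSpace X] (𝒰 : Set (Set X)) : ℕ :=
  sInf {m : ℕ | ∃ 𝒱 : Set (Set X),
    IsFinOpenCover X 𝒱 ∧ (∀ V ∈ 𝒱, ∃ U ∈ 𝒰, V ⊆ U) ∧ ordCover X 𝒱 = m}

/-- Lebesgue covering dimension. -/
def covDim (K : Type) [TopologicalSpace K] : ℕ∞ :=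
  ⨆ (𝒰 : Set (Set K)) (_ : IsFinOpenCover K 𝒰), (degCover K 𝒰 : ℕ∞)

/-- `Widim_ε(X, ρ)`: minimal covering dimension of a compact metric space `K`
admitting a continuous `ε`-embedding (w.r.t. the distance function `ρ`) from `X`. -/
def widim (X : Type) [TopologicalSpace X] (ρ : X → X → ℝ) (ε : ℝ) : ℕ∞ :=
  sInf {m : ℕ∞ | ∃ (K : Type) (_ : MetricSpace K) (_ : CompactSpace K) (f : X → K),
    Continuous f ∧ (∀ x y, f x = f y → ρ x y < ε) ∧ covDim K = m}

/-- The dynamical distance `ρ^T_Ω(x,y) = sup_{n ∈ Ω} ρ(T^n x, T^n y)`. -/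
def dynDist {X : Type} {k : ℕ} (ρ : X → X → ℝ) (T : (Fin k → ℤ) → X → X)
    (Ω : Set (Fin k → ℤ)) (x y : X) : ℝ :=
  ⨆ n ∈ Ω, ρ (T n x) (T n y)

/-- The cube `[-N,N]^k ⊆ ℤ^k`. -/
def cubeZ (k N : ℕ) : Set (Fin k → ℤ) := {n | ∀ i, |n i| ≤ (N : ℤ)}

/-- The boundary `∂[-N,N]^k ⊆ ℤ^k`. -/
def cubeBoundary (k N : ℕ) : Set (Fin k → ℤ) :=
  {n | (∀ i, |n i| ≤ (N : ℤ)) ∧ ∃ j, n j = (N : ℤ) ∨ n j = -(N : ℤ)}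

/-- The natural embedding `ℤ^k → ℝ^k`. -/
def embZR {k : ℕ} (u : Fin k → ℤ) : EuclideanSpace ℝ (Fin k) := WithLp.toLp 2 (fun i => (u i : ℝ))

/-- `B_r(V) = {u ∈ ℤ^k : |u - w| < r for some w ∈ V}`. -/
def ballZ (k : ℕ) (V : Set (EuclideanSpace ℝ (Fin k))) (r : ℝ) : Set (Fin k → ℤ) :=
  {u | ∃ w ∈ V, dist (embZR u) w < r}

/-- `vol_h(V ∩ [-N,N]^k)`, the `h`-dimensional Hausdorff measure of the
intersection of `V` with the real cube `[-N,N]^k`. -/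
def volCap (k h : ℕ) (V : Submodule ℝ (EuclideanSpace ℝ (Fin k))) (N : ℕ) : ℝ≥0∞ :=
  μH[(h : ℝ)] ((V : Set (EuclideanSpace ℝ (Fin k))) ∩ {x | ∀ i, |x i| ≤ (N : ℝ)})

/-- The `h`-dimensional directional mean dimension of the `ℤ^k`-action `T` with respect to
the subspace `V`, computed with the parameter `r` and the distance function `ρ`:
`mdim(X,T,V;r) = lim_{ε→0} liminf_{N→∞} Widim_ε(X, ρ^T_{B_r(V) ∩ [-N,N]^k}) / vol_h(V ∩ [-N,N]^k)`
(the limit as `ε → 0` of a quantity nonincreasing in `ε` is its supremum over `ε > 0`). -/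
def dirMdim (k : ℕ) (X : Type) [TopologicalSpace X] (ρ : X → X → ℝ)
    (T : (Fin k → ℤ) → X → X) (V : Submodule ℝ (EuclideanSpace ℝ (Fin k)))
    (r : ℝ) (h : ℕ) : ℝ≥0∞ :=
  ⨆ (ε : ℝ) (_ : 0 < ε),
    Filter.liminf (fun N : ℕ =>
      (widim X (dynDist ρ T (ballZ k (V : Set (EuclideanSpace ℝ (Fin k))) r ∩ cubeZ k N)) ε
        : ℝ≥0∞) / volCap k h V N) Filter.atTop

/-- `T` is a continuous action of `ℤ^k` on `X`. -/
structure IsZkAction (k : ℕ) (X : Type) [TopologicalSpace X]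
    (T : (Fin k → ℤ) → X → X) : Prop where
  cont : ∀ n, Continuous (T n)
  zero : T 0 = id
  add : ∀ m n, T (m + n) = T m ∘ T n

/-- The join `⋁_{n ∈ Ω} T^n 𝒰`; here `T^n(U) = (T^{-n})⁻¹(U)` since `T^n` is a
bijection with inverse `T^{-n}`. -/
def joinCover {X : Type} {k : ℕ} (T : (Fin k → ℤ) → X → X) (Ω : Set (Fin k → ℤ))
    (𝒰 : Set (Set X)) : Set (Set X) :=
  {W | ∃ g : (Fin k → ℤ) → Set X, (∀ n ∈ Ω, g n ∈ 𝒰) ∧ W = ⋂ n ∈ Ω, T (-n) ⁻¹' g n}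

/-- The mean dimension of a `ℤ^m`-action:
`mdim(X,ℤ^m,S) = sup_𝒰 lim_{N→∞} D(⋁_{n∈[-N,N]^m} S^n 𝒰)/(2N+1)^m`. -/
def mdimAct (m : ℕ) (X : Type) [TopologicalSpace X] (S : (Fin m → ℤ) → X → X) : ℝ≥0∞ :=
  ⨆ (𝒰 : Set (Set X)) (_ : IsFinOpenCover X 𝒰),
    Filter.liminf (fun N : ℕ =>
      (degCover X (joinCover S (cubeZ m N) 𝒰) : ℝ≥0∞) / (2 * N + 1 : ℝ≥0∞) ^ m)
      Filter.atTop

/-- Diameter of a set with respect to a distance function `ρ`. -/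
def diamBy {X : Type} (ρ : X → X → ℝ) (s : Set X) : ℝ := ⨆ x ∈ s, ⨆ y ∈ s, ρ x y

/-- Mesh of a cover with respect to a distance function `ρ`. -/
def meshBy {X : Type} (ρ : X → X → ℝ) (𝒲 : Set (Set X)) : ℝ := ⨆ W ∈ 𝒲, diamBy ρ W

end

section AuxProof

open Filter

lemma coord_le_dist {k : ℕ} (x y : EuclideanSpace ℝ (Fin k)) (i : Fin k) :
    |x i - y i| ≤ dist x y := by
  rw [EuclideanSpace.dist_eq, ← Real.sqrt_sq_eq_abs]
  apply Real.sqrt_le_sqrt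
  have hd : (x i - y i) ^ 2 = dist (x i) (y i) ^ 2 := by
    rw [Real.dist_eq, sq_abs]
  rw [hd]
  exact Finset.single_le_sum (f := fun j => dist (x j) (y j) ^ 2)
    (fun j _ => sq_nonneg _) (Finset.mem_univ i)

lemma dist_le_of_coord {k : ℕ} {x y : EuclideanSpace ℝ (Fin k)} {c : ℝ} (hc : 0 ≤ c)
    (hcoord : ∀ i, |x i - y i| ≤ c) : dist x y ≤ Real.sqrt k * c := by
  rw [EuclideanSpace.dist_eq]
  have h2 : ∑ i, dist (x i) (y i) ^ 2 ≤ (k : ℝ) * c ^ 2 := by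
    calc ∑ i, dist (x i) (y i) ^ 2 ≤ ∑ _i : Fin k, c ^ 2 := by
          refine Finset.sum_le_sum fun i _ => ?_
          rw [Real.dist_eq]
          exact pow_le_pow_left₀ (abs_nonneg _) (hcoord i) 2
      _ = (k : ℝ) * c ^ 2 := by
          simp [Finset.sum_const, Finset.card_univ, nsmul_eq_mul]
  calc Real.sqrt (∑ i, dist (x i) (y i) ^ 2) ≤ Real.sqrt ((k : ℝ) * c ^ 2) :=
        Real.sqrt_le_sqrt h2
    _ = Real.sqrt k * c := by
        rw [Real.sqrt_mul (by positivity), Real.sqrt_sq hc]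

lemma geom_lemma (k : ℕ) (V : Submodule ℝ (EuclideanSpace ℝ (Fin k))) (r₁ r₂ : ℝ)
    (hr₁ : Real.sqrt k / 2 < r₁) (hr₂ : Real.sqrt k / 2 < r₂) :
    ∃ L : ℕ, ∀ N : ℕ, 1 ≤ N →
      ∀ u ∈ ballZ k (V : Set (EuclideanSpace ℝ (Fin k))) r₂ ∩ cubeZ k N,
      ∃ a v : Fin k → ℤ, a ∈ cubeZ k L ∧
        v ∈ ballZ k (V : Set (EuclideanSpace ℝ (Fin k))) r₁ ∩ cubeZ k N ∧ u = a + v := by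
  have hsk : (0 : ℝ) ≤ Real.sqrt k := Real.sqrt_nonneg _
  have hr₂0 : (0 : ℝ) < r₂ := lt_of_le_of_lt (by positivity) hr₂
  set R : ℝ := r₂ + Real.sqrt k * (r₂ + 1 / 2) + Real.sqrt k / 2 with hR
  refine ⟨⌈R⌉₊, fun N hN u hu => ?_⟩
  obtain ⟨⟨w, hwV, hdw⟩, hcube⟩ := hu
  have hNR : (1 : ℝ) ≤ (N : ℝ) := by exact_mod_cast hN
  have hden : (0 : ℝ) < (N : ℝ) + r₂ := by linarith
  set t : ℝ := (r₂ + 1 / 2) / ((N : ℝ) + r₂) with htdef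
  have ht0 : 0 < t := by positivity
  have htm : t * ((N : ℝ) + r₂) = r₂ + 1 / 2 := by
    rw [htdef, div_mul_cancel₀ _ (ne_of_gt hden)]
  have ht1 : t ≤ 1 := by
    rw [div_le_one hden]; linarith
  set w' : EuclideanSpace ℝ (Fin k) := (1 - t) • w with hw'def
  have hw'V : w' ∈ (V : Set (EuclideanSpace ℝ (Fin k))) := V.smul_mem _ hwV
  have hw'app : ∀ i, w' i = (1 - t) * w i := fun i => rfl
  -- coordinate bound on w
  have hwcoord : ∀ i, |w i| ≤ (N : ℝ) + r₂ := by
    intro i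
    have h1 : |(embZR u) i - w i| ≤ dist (embZR u) w := coord_le_dist _ _ i
    have h2 : |(embZR u) i| ≤ (N : ℝ) := by
      have := hcube i
      have : |((u i : ℤ) : ℝ)| ≤ (N : ℝ) := by exact_mod_cast this
      simpa [embZR] using this
    calc |w i| ≤ |(embZR u) i| + |(embZR u) i - w i| := by
          rw [abs_sub_comm]
          calc |w i| = |(embZR u) i + (w i - (embZR u) i)| := by ring_nf
            _ ≤ |(embZR u) i| + |w i - (embZR u) i| := abs_add_le _ _
      _ ≤ (N : ℝ) + r₂ := by
          have := le_of_lt hdw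
          linarith [h1, h2, this]
  set v : Fin k → ℤ := fun i => round (w' i) with hvdef
  have hvw' : ∀ i, |(embZR v) i - w' i| ≤ 1 / 2 := by
    intro i
    simpa [embZR, abs_sub_comm] using abs_sub_round (w' i)
  have hvdist : dist (embZR v) w' ≤ Real.sqrt k / 2 := by
    have := dist_le_of_coord (by norm_num) hvw'
    calc dist (embZR v) w' ≤ Real.sqrt k * (1 / 2) := this
      _ = Real.sqrt k / 2 := by ring
  have hvball : v ∈ ballZ k (V : Set (EuclideanSpace ℝ (Fin k))) r₁ :=
    ⟨w', hw'V, lt_of_le_of_lt hvdist hr₁⟩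
  have hvcube : v ∈ cubeZ k N := by
    intro i
    have h1 : |w' i| ≤ (N : ℝ) - 1 / 2 := by
      rw [hw'app]
      rw [abs_mul]
      have h1t : |1 - t| = 1 - t := abs_of_nonneg (by linarith)
      rw [h1t]
      calc (1 - t) * |w i| ≤ (1 - t) * ((N : ℝ) + r₂) :=
            mul_le_mul_of_nonneg_left (hwcoord i) (by linarith)
        _ = (N : ℝ) - 1 / 2 := by
            have : (1 - t) * ((N : ℝ) + r₂) = ((N : ℝ) + r₂) - t * ((N : ℝ) + r₂) := by ring
            rw [this, htm]; ring
    have h2 : |(embZR v) i| ≤ (N : ℝ) := by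
      calc |(embZR v) i| = |((embZR v) i - w' i) + w' i| := by ring_nf
        _ ≤ |(embZR v) i - w' i| + |w' i| := abs_add_le _ _
        _ ≤ 1 / 2 + ((N : ℝ) - 1 / 2) := add_le_add (hvw' i) h1
        _ = (N : ℝ) := by ring
    have : |((v i : ℤ) : ℝ)| ≤ ((N : ℤ) : ℝ) := by simpa [embZR] using h2
    exact_mod_cast this
  refine ⟨u - v, v, ?_, ⟨hvball, hvcube⟩, by ring⟩
  -- a ∈ cubeZ k L
  intro i
  have hnormw : dist w w' ≤ Real.sqrt k * (r₂ + 1 / 2) := by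
    have hcoord : ∀ i, |w i - w' i| ≤ t * ((N : ℝ) + r₂) := by
      intro i
      rw [hw'app]
      have : w i - (1 - t) * w i = t * w i := by ring
      rw [this, abs_mul, abs_of_pos ht0]
      exact mul_le_mul_of_nonneg_left (hwcoord i) (le_of_lt ht0)
    have := dist_le_of_coord (by positivity) hcoord
    calc dist w w' ≤ Real.sqrt k * (t * ((N : ℝ) + r₂)) := this
      _ = Real.sqrt k * (r₂ + 1 / 2) := by rw [htm]
  have hdistuv : dist (embZR u) (embZR v) ≤ R := by
    calc dist (embZR u) (embZR v) ≤ dist (embZR u) w + dist w w' + dist w' (embZR v) :=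
          dist_triangle4 _ _ _ _
      _ ≤ r₂ + Real.sqrt k * (r₂ + 1 / 2) + Real.sqrt k / 2 := by
          rw [dist_comm w' (embZR v)]
          exact add_le_add (add_le_add (le_of_lt hdw) hnormw) hvdist
  have h1 : |(embZR u) i - (embZR v) i| ≤ dist (embZR u) (embZR v) := coord_le_dist _ _ i
  have h2 : |((u i - v i : ℤ) : ℝ)| ≤ (⌈R⌉₊ : ℝ) := by
    have : ((u i - v i : ℤ) : ℝ) = (embZR u) i - (embZR v) i := by
      show ((u i - v i : ℤ) : ℝ) = (u i : ℝ) - (v i : ℝ)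
      push_cast; ring
    rw [this]
    exact le_trans h1 (le_trans hdistuv (Nat.le_ceil R))
  have : |(u - v) i| ≤ ((⌈R⌉₊ : ℕ) : ℤ) := by
    have h3 : (u - v) i = u i - v i := rfl
    rw [h3]
    exact_mod_cast h2
  exact this

lemma dynDist_le_of {X : Type} [MetricSpace X] {k : ℕ} (T : (Fin k → ℤ) → X → X)
    (Ω : Set (Fin k → ℤ)) {x y : X} {c : ℝ} (hc : 0 ≤ c)
    (hb : ∀ n ∈ Ω, dist (T n x) (T n y) ≤ c) : dynDist dist T Ω x y ≤ c :=
  Real.iSup_le (fun n => Real.iSup_le (fun hn => hb n hn) hc) hc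

lemma le_dynDist {X : Type} [MetricSpace X] [CompactSpace X] {k : ℕ}
    (T : (Fin k → ℤ) → X → X) (Ω : Set (Fin k → ℤ)) {x y : X} {n : Fin k → ℤ}
    (hn : n ∈ Ω) : dist (T n x) (T n y) ≤ dynDist dist T Ω x y := by
  have hb : ∀ m, (⨆ _ : m ∈ Ω, dist (T m x) (T m y)) ≤ Metric.diam (Set.univ : Set X) :=
    fun m => Real.iSup_le
      (fun _ => Metric.dist_le_diam_of_mem isCompact_univ.isBounded trivial trivial)
      Metric.diam_nonneg
  have heq : dist (T n x) (T n y) = ⨆ _ : n ∈ Ω, dist (T n x) (T n y) := by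
    haveI : Nonempty (n ∈ Ω) := ⟨hn⟩
    exact (ciSup_const).symm
  rw [heq]
  exact le_ciSup ⟨Metric.diam (Set.univ : Set X), by rintro r ⟨m, rfl⟩; exact hb m⟩ n

lemma widim_mono_of {X : Type} [TopologicalSpace X] {ρ₁ ρ₂ : X → X → ℝ} {δ ε : ℝ}
    (himp : ∀ x y, ρ₁ x y < δ → ρ₂ x y < ε) : widim X ρ₂ ε ≤ widim X ρ₁ δ := by
  apply sInf_le_sInf
  rintro m ⟨K, hK1, hK2, f, hf, hemb, hKm⟩
  exact ⟨K, hK1, hK2, f, hf, fun x y hxy => himp x y (hemb x y hxy), hKm⟩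

lemma cubeZ_finite (k N : ℕ) : (cubeZ k N).Finite := by
  apply Set.Finite.subset (Set.Finite.pi (fun i : Fin k => Set.finite_Icc (-(N : ℤ)) N))
  intro n hn i _
  exact Set.mem_Icc.mpr (abs_le.mp (hn i))

lemma exists_delta {X : Type} [MetricSpace X] [CompactSpace X] {k : ℕ}
    (T : (Fin k → ℤ) → X → X) (hT : IsZkAction k X T) {A : Set (Fin k → ℤ)}
    (hA : A.Finite) {ε : ℝ} (hε : 0 < ε) :
    ∃ δ > 0, ∀ a ∈ A, ∀ x y : X, dist x y < δ → dist (T a x) (T a y) < ε := by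
  refine Set.Finite.induction_on
    (motive := fun B _ => ∃ δ > 0, ∀ a ∈ B, ∀ x y : X, dist x y < δ → dist (T a x) (T a y) < ε)
    A hA ⟨1, one_pos, by simp⟩ ?_
  rintro a s - - ⟨δ₁, hδ₁, h₁⟩
  · 
    have hu : UniformContinuous (T a) :=
      CompactSpace.uniformContinuous_of_continuous (hT.cont a)
    obtain ⟨δ₂, hδ₂, h₂⟩ := Metric.uniformContinuous_iff.mp hu ε hε
    refine ⟨min δ₁ δ₂, lt_min hδ₁ hδ₂, ?_⟩
    rintro b hb x y hxy
    rcases Set.mem_insert_iff.mp hb with rfl | hb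
    · exact h₂ (lt_of_lt_of_le hxy (min_le_right _ _))
    · exact h₁ b hb x y (lt_of_lt_of_le hxy (min_le_left _ _))

lemma dirMdim_le_aux (k : ℕ) (X : Type) [MetricSpace X] [CompactSpace X]
    (T : (Fin k → ℤ) → X → X) (hT : IsZkAction k X T)
    (h : ℕ) (V : Submodule ℝ (EuclideanSpace ℝ (Fin k)))
    (r₁ r₂ : ℝ) (hr₁ : Real.sqrt k / 2 < r₁) (hr₂ : Real.sqrt k / 2 < r₂) :
    dirMdim k X dist T V r₂ h ≤ dirMdim k X dist T V r₁ h := by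
  obtain ⟨L, hL⟩ := geom_lemma k V r₁ r₂ hr₁ hr₂
  rw [dirMdim, dirMdim]
  refine iSup₂_le fun ε hε => ?_
  obtain ⟨δ, hδ, hδ'⟩ := exists_delta T hT (cubeZ_finite k L) (half_pos hε)
  have key : ∀ N : ℕ, 1 ≤ N →
      widim X (dynDist dist T
        (ballZ k (V : Set (EuclideanSpace ℝ (Fin k))) r₂ ∩ cubeZ k N)) ε ≤
      widim X (dynDist dist T
        (ballZ k (V : Set (EuclideanSpace ℝ (Fin k))) r₁ ∩ cubeZ k N)) δ := by
    intro N hN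
    apply widim_mono_of
    intro x y hxy
    have hdyn : dynDist dist T
        (ballZ k (V : Set (EuclideanSpace ℝ (Fin k))) r₂ ∩ cubeZ k N) x y ≤ ε / 2 := by
      apply dynDist_le_of _ _ (le_of_lt (half_pos hε))
      intro u hu
      obtain ⟨a, v, ha, hv, rfl⟩ := hL N hN u hu
      have h1 : dist (T v x) (T v y) < δ := lt_of_le_of_lt (le_dynDist T _ hv) hxy
      have h2 := hδ' a ha _ _ h1
      have h3 : T (a + v) x = T a (T v x) := by rw [hT.add]; rfl
      have h4 : T (a + v) y = T a (T v y) := by rw [hT.add]; rfl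
      rw [h3, h4]
      exact le_of_lt h2
    linarith
  refine le_trans ?_ (le_iSup₂ (f := fun (ε' : ℝ) (_ : 0 < ε') =>
    liminf (fun N : ℕ =>
      (widim X (dynDist dist T
        (ballZ k (V : Set (EuclideanSpace ℝ (Fin k))) r₁ ∩ cubeZ k N)) ε' : ℝ≥0∞) /
      volCap k h V N) atTop) δ hδ)
  have hev : (fun N : ℕ =>
      (widim X (dynDist dist T
        (ballZ k (V : Set (EuclideanSpace ℝ (Fin k))) r₂ ∩ cubeZ k N)) ε : ℝ≥0∞) /
      volCap k h V N) ≤ᶠ[atTop] (fun N : ℕ =>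
      (widim X (dynDist dist T
        (ballZ k (V : Set (EuclideanSpace ℝ (Fin k))) r₁ ∩ cubeZ k N)) δ : ℝ≥0∞) /
      volCap k h V N) := by
    filter_upwards [eventually_ge_atTop 1] with N hN
    exact ENNReal.div_le_div_right (ENat.toENNReal_le.mpr (key N hN)) _
  exact liminf_le_liminf hev

end AuxProof

/-- The directional mean dimension is independent of the choice of the
parameter `r > √k/2`. -/
theorem dirMdim_indep_radius
    (k : ℕ) (X : Type) [MetricSpace X] [CompactSpace X]
    (T : (Fin k → ℤ) → X → X) (hT : IsZkAction k X T)
    (h : ℕ) (hh1 : 1 ≤ h) (hhk : h ≤ k)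
    (V : Submodule ℝ (EuclideanSpace ℝ (Fin k))) (hV : Module.finrank ℝ V = h)
    (r₁ r₂ : ℝ) (hr₁ : Real.sqrt k / 2 < r₁) (hr₂ : Real.sqrt k / 2 < r₂) :
    dirMdim k X dist T V r₁ h = dirMdim k X dist T V r₂ h :=
  le_antisymm (dirMdim_le_aux k X T hT h V r₂ r₁ hr₂ hr₁)
    (dirMdim_le_aux k X T hT h V r₁ r₂ hr₁ hr₂)
end

section
/- Let (X,Z^k,T) be a continuum-wise expansive Z^k-action on a compact metric space (X,d) with expansivity constant 2c > 0. Then there exists δ > 0 such that for every connected compact subset A of X and every integer N ≥ 1: if c ≤ max{diam T^n(A) : n ∈ [-N,N]^k} ≤ 2c, then max{diam T^n(A) : n ∈ ∂[-N,N]^k} > δ. -/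
open Set Filter Metric MeasureTheory
open scoped ENNReal NNReal

private lemma diam_le_add_hdist {X : Type} [MetricSpace X] [CompactSpace X]
    {s t : Set X} (hs : s.Nonempty) (ht : t.Nonempty) (htc : IsCompact t) :
    Metric.diam s ≤ Metric.diam t + 2 * Metric.hausdorffDist s t := by
  have hfin : EMetric.hausdorffEdist s t ≠ ⊤ :=
    Metric.hausdorffEdist_ne_top_of_nonempty_of_bounded hs ht
      Metric.isBounded_of_compactSpace Metric.isBounded_of_compactSpace
  have h0 : (0:ℝ) ≤ Metric.diam t + 2 * Metric.hausdorffDist s t :=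
    add_nonneg Metric.diam_nonneg (by
      have := Metric.hausdorffDist_nonneg (s := s) (t := t); linarith)
  apply Metric.diam_le_of_forall_dist_le h0
  intro x hx y hy
  obtain ⟨x', hx't, hxx'⟩ := htc.exists_infDist_eq_dist ht x
  obtain ⟨y', hy't, hyy'⟩ := htc.exists_infDist_eq_dist ht y
  have h1 : dist x x' ≤ Metric.hausdorffDist s t := by
    rw [← hxx']; exact Metric.infDist_le_hausdorffDist_of_mem hx hfin
  have h2 : dist y y' ≤ Metric.hausdorffDist s t := by
    rw [← hyy']; exact Metric.infDist_le_hausdorffDist_of_mem hy hfin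
  have h3 : dist x' y' ≤ Metric.diam t :=
    Metric.dist_le_diam_of_mem Metric.isBounded_of_compactSpace hx't hy't
  have h4 : dist x y ≤ dist x x' + dist x' y' + dist y' y := dist_triangle4 x x' y' y
  rw [dist_comm y' y] at h4
  linarith

private lemma hdist_image_le {X : Type} [MetricSpace X] [CompactSpace X]
    {f : X → X} (hf : Continuous f) {ε : ℝ} (hε : 0 < ε) :
    ∃ δ > (0:ℝ), ∀ s t : Set X, s.Nonempty → t.Nonempty →
      Metric.hausdorffDist s t < δ → Metric.hausdorffDist (f '' s) (f '' t) ≤ ε := by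
  have huc := CompactSpace.uniformContinuous_of_continuous hf
  obtain ⟨δ, hδ, hδ'⟩ := Metric.uniformContinuous_iff.1 huc ε hε
  refine ⟨δ, hδ, fun s t hs ht hst => ?_⟩
  have hfin : EMetric.hausdorffEdist s t ≠ ⊤ :=
    Metric.hausdorffEdist_ne_top_of_nonempty_of_bounded hs ht
      Metric.isBounded_of_compactSpace Metric.isBounded_of_compactSpace
  have hfin' : EMetric.hausdorffEdist t s ≠ ⊤ := by
    rw [EMetric.hausdorffEdist, Metric.hausdorffEDist_comm]; exact hfin
  apply Metric.hausdorffDist_le_of_mem_dist hε.le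
  · rintro x ⟨a, ha, rfl⟩
    obtain ⟨b, hb, hab⟩ := Metric.exists_dist_lt_of_hausdorffDist_lt ha hst hfin
    exact ⟨f b, Set.mem_image_of_mem f hb, (hδ' hab).le⟩
  · rintro y ⟨b, hb, rfl⟩
    obtain ⟨a, ha, hba⟩ := Metric.exists_dist_lt_of_hausdorffDist_lt hb
      (by rwa [Metric.hausdorffDist_comm]) hfin'
    exact ⟨f a, Set.mem_image_of_mem f ha, (hδ' hba).le⟩

private lemma isConnected_of_hausdorff_limit {X : Type} [MetricSpace X] [CompactSpace X]
    (B : ℕ → Set X) (hBn : ∀ i, (B i).Nonempty)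
    (hBconn : ∀ i, IsPreconnected (B i))
    (A : Set X) (hA : IsCompact A) (hAne : A.Nonempty)
    (hd : ∀ ε > (0:ℝ), ∃ i, Metric.hausdorffDist (B i) A < ε) :
    IsConnected A := by
  refine ⟨hAne, ?_⟩
  rintro u v hu hv hsub ⟨x, hxA, hxu⟩ ⟨y, hyA, hyv⟩
  by_contra hne
  have hne' : ∀ z, z ∈ A → z ∈ u → z ∈ v → False := fun z h1 h2 h3 =>
    hne ⟨z, h1, h2, h3⟩
  set s1 : Set X := A ∩ vᶜ with hs1
  set s2 : Set X := A ∩ uᶜ with hs2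
  have hs1c : IsCompact s1 := hA.inter_right (isClosed_compl_iff.2 hv)
  have hs2c : IsCompact s2 := hA.inter_right (isClosed_compl_iff.2 hu)
  have hdisj : Disjoint s1 s2 := by
    rw [Set.disjoint_left]
    rintro z ⟨hzA, hzv⟩ ⟨-, hzu⟩
    rcases hsub hzA with h | h
    exacts [hzu h, hzv h]
  obtain ⟨δ, hδ, hth⟩ := hdisj.exists_thickenings hs1c hs2c.isClosed
  obtain ⟨i, hi⟩ := hd δ hδ
  have hfin : EMetric.hausdorffEdist (B i) A ≠ ⊤ :=
    Metric.hausdorffEdist_ne_top_of_nonempty_of_bounded (hBn i) hAne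
      Metric.isBounded_of_compactSpace Metric.isBounded_of_compactSpace
  have hxs1 : x ∈ s1 := ⟨hxA, fun hv' => hne' x hxA hxu hv'⟩
  have hys2 : y ∈ s2 := ⟨hyA, fun hu' => hne' y hyA hu' hyv⟩
  have hAsub : A ⊆ s1 ∪ s2 := by
    intro z hz
    by_cases hzv : z ∈ v
    · exact Or.inr ⟨hz, fun hzu => hne' z hz hzu hzv⟩
    · exact Or.inl ⟨hz, hzv⟩
  have hBsub : B i ⊆ Metric.thickening δ s1 ∪ Metric.thickening δ s2 := by
    intro z hz
    obtain ⟨a, haA, hza⟩ := Metric.exists_dist_lt_of_hausdorffDist_lt hz hi hfin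
    rcases hAsub haA with h | h
    · exact Or.inl (Metric.mem_thickening_iff.2 ⟨a, h, hza⟩)
    · exact Or.inr (Metric.mem_thickening_iff.2 ⟨a, h, hza⟩)
  obtain ⟨x', hx'B, hxx'⟩ := Metric.exists_dist_lt_of_hausdorffDist_lt' hxA hi hfin
  obtain ⟨y', hy'B, hyy'⟩ := Metric.exists_dist_lt_of_hausdorffDist_lt' hyA hi hfin
  have h1 : (B i ∩ Metric.thickening δ s1).Nonempty :=
    ⟨x', hx'B, Metric.mem_thickening_iff.2 ⟨x, hxs1, hxx'⟩⟩
  have h2 : (B i ∩ Metric.thickening δ s2).Nonempty :=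
    ⟨y', hy'B, Metric.mem_thickening_iff.2 ⟨y, hys2, hyy'⟩⟩
  obtain ⟨z, -, hz1, hz2⟩ := hBconn i _ _ Metric.isOpen_thickening
    Metric.isOpen_thickening hBsub h1 h2
  exact (Set.disjoint_left.1 hth hz1) hz2

/-- For a continuum-wise expansive `ℤ^k`-action with expansivity constant
`2c`, there is `δ > 0` such that any continuum whose maximal diameter over the cube
`[-N,N]^k` lies in `[c, 2c]` has some iterate over the boundary `∂[-N,N]^k` of diameter
greater than `δ`. -/
theorem cw_expansive_boundary_diam
    (k : ℕ) (X : Type) [MetricSpace X] [CompactSpace X]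
    (T : (Fin k → ℤ) → X → X) (hT : IsZkAction k X T) (c : ℝ) (hc : 0 < c)
    (hexp : ∀ A : Set X, IsCompact A → IsConnected A → A.Nontrivial →
      ∃ n : Fin k → ℤ, 2 * c < Metric.diam (T n '' A)) :
    ∃ δ > (0 : ℝ), ∀ A : Set X, IsCompact A → IsConnected A → ∀ N : ℕ, 1 ≤ N →
      (∃ n ∈ cubeZ k N, c ≤ Metric.diam (T n '' A)) →
      (∀ n ∈ cubeZ k N, Metric.diam (T n '' A) ≤ 2 * c) →
      ∃ n ∈ cubeBoundary k N, δ < Metric.diam (T n '' A) := by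
  classical
  by_contra hcon
  push_neg at hcon
  have hcon' : ∀ i : ℕ, ∃ A : Set X, IsCompact A ∧ IsConnected A ∧ ∃ N : ℕ,
      1 ≤ N ∧ (∃ n ∈ cubeZ k N, c ≤ Metric.diam (T n '' A)) ∧
      (∀ n ∈ cubeZ k N, Metric.diam (T n '' A) ≤ 2 * c) ∧
      (∀ n ∈ cubeBoundary k N, Metric.diam (T n '' A) ≤ ((i : ℝ) + 1)⁻¹) :=
    fun i => hcon ((i : ℝ) + 1)⁻¹ (by positivity)
  choose A hAc hAco hrest using hcon'
  choose N hN1 hex hub hbd using hrest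
  choose n hn hnd using hex
  have hn' : ∀ i j, |n i j| ≤ (N i : ℤ) := fun i j => hn i j
  set B : ℕ → Set X := fun i => T (n i) '' A i with hB
  have hBc : ∀ i, IsCompact (B i) := fun i => (hAc i).image (hT.cont _)
  have hBne : ∀ i, (B i).Nonempty := fun i => (hAco i).nonempty.image _
  have hBconn : ∀ i, IsPreconnected (B i) := fun i =>
    ((hAco i).image _ (hT.cont _).continuousOn).isPreconnected
  have hBlb : ∀ i, c ≤ Metric.diam (B i) := hnd
  have himg : ∀ (m b : Fin k → ℤ) (S : Set X),
      T (m + b) '' S = T m '' (T b '' S) := by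
    intro m b S
    rw [hT.add m b, Set.image_comp]
  -- the margin between `n i` and the boundary of the cube tends to infinity
  have hMargin : ∀ L : ℕ, ∀ᶠ i in Filter.atTop,
      ∀ j, |n i j| + (L : ℤ) ≤ (N i : ℤ) := by
    intro L
    set F : Finset (Fin k → ℤ) :=
      Fintype.piFinset (fun _ : Fin k => Finset.Icc (-(L : ℤ)) (L : ℤ)) with hF
    have hgc : Continuous (fun x : X => fun m : F => T m.1 x) :=
      continuous_pi fun m => hT.cont m.1
    have huc := CompactSpace.uniformContinuous_of_continuous hgc
    obtain ⟨δ, hδ, hδ'⟩ := Metric.uniformContinuous_iff.1 huc (c / 2) (by linarith)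
    obtain ⟨I, hI⟩ := exists_nat_one_div_lt hδ
    filter_upwards [Filter.eventually_ge_atTop I] with i hi
    intro j
    by_contra hj
    push_neg at hj
    set b : Fin k → ℤ :=
      Function.update (n i) j (if 0 ≤ n i j then (N i : ℤ) else -(N i : ℤ)) with hb
    have hNnn : (0 : ℤ) ≤ (N i : ℤ) := Int.natCast_nonneg _
    have hbB : b ∈ cubeBoundary k (N i) := by
      refine ⟨fun j' => ?_, j, ?_⟩
      · by_cases h : j' = j
        · rw [h, hb, Function.update_self]
          split_ifs <;> simp [abs_of_nonneg, abs_neg, hNnn]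
        · rw [hb, Function.update_of_ne h]
          exact hn' i j'
      · rw [hb, Function.update_self]
        split_ifs
        exacts [Or.inl rfl, Or.inr rfl]
    set m : Fin k → ℤ := n i - b with hm
    have hmb : m + b = n i := by
      ext j'
      simp [hm]
    have hmF : m ∈ F := by
      rw [hF, Fintype.mem_piFinset]
      intro j'
      rw [Finset.mem_Icc]
      by_cases h : j' = j
      · rw [h, hm, Pi.sub_apply, hb, Function.update_self]
        have hnj := abs_le.1 (hn' i j)
        rcases abs_cases (n i j) with ⟨h1, h2⟩ | ⟨h1, h2⟩ <;> rw [h1] at hj <;>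
          split_ifs <;> omega
      · rw [hm, Pi.sub_apply, hb, Function.update_of_ne h, sub_self]
        omega
    have hbd' : Metric.diam (T b '' A i) ≤ ((i : ℝ) + 1)⁻¹ := hbd i b hbB
    have hdiam : Metric.diam (B i) ≤ c / 2 := by
      have hBi : B i = T m '' (T b '' A i) := by
        rw [← himg m b (A i), hmb]
      rw [hBi]
      apply Metric.diam_le_of_forall_dist_le (by linarith)
      rintro x ⟨u, hu, rfl⟩ y ⟨v, hv, rfl⟩
      have huv : dist u v < δ := by
        have h1 : dist u v ≤ Metric.diam (T b '' A i) :=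
          Metric.dist_le_diam_of_mem Metric.isBounded_of_compactSpace hu hv
        have h2 : ((i : ℝ) + 1)⁻¹ ≤ ((I : ℝ) + 1)⁻¹ := by
          apply inv_anti₀ (by positivity)
          exact_mod_cast Nat.add_le_add_right hi 1
        have h3 : (1 : ℝ) / (I + 1) < δ := hI
        rw [one_div] at h3
        linarith
      have h4 := hδ' huv
      have h5 : dist (T m u) (T m v) ≤
          dist (fun m' : F => T m'.1 u) (fun m' : F => T m'.1 v) :=
        dist_le_pi_dist (fun m' : F => T m'.1 u) (fun m' : F => T m'.1 v) ⟨m, hmF⟩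
      linarith
    linarith [hBlb i]
  -- pass to a Hausdorff-convergent subsequence
  let Bc : ℕ → TopologicalSpace.NonemptyCompacts X := fun i => ⟨⟨B i, hBc i⟩, hBne i⟩
  obtain ⟨K, φ, hφ, hlim⟩ := CompactSpace.tendsto_subseq Bc
  set Ainf : Set X := (K : Set X) with hAinf
  have hAinfc : IsCompact Ainf := K.isCompact
  have hAinfne : Ainf.Nonempty := K.nonempty
  have hdist : ∀ ε > (0 : ℝ), ∀ᶠ i in Filter.atTop,
      Metric.hausdorffDist (B (φ i)) Ainf < ε := by
    intro ε hε
    obtain ⟨I0, hI0⟩ := Metric.tendsto_atTop.1 hlim ε hε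
    refine Filter.eventually_atTop.2 ⟨I0, fun i hi => ?_⟩
    exact hI0 i hi
  have hAinfdiam : c ≤ Metric.diam Ainf := by
    refine le_of_forall_pos_le_add fun ε hε => ?_
    obtain ⟨i, hi⟩ := (hdist (ε / 2) (by linarith)).exists
    have h1 := diam_le_add_hdist (hBne (φ i)) hAinfne hAinfc
    have h2 := hBlb (φ i)
    linarith
  have hAinfconn : IsConnected Ainf :=
    isConnected_of_hausdorff_limit (fun i => B (φ i)) (fun i => hBne _)
      (fun i => hBconn _) Ainf hAinfc hAinfne (fun ε hε => (hdist ε hε).exists)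
  have hAinfnt : Ainf.Nontrivial := by
    by_contra h
    rw [Set.not_nontrivial_iff] at h
    have := Metric.diam_subsingleton h
    linarith
  have hubinf : ∀ m : Fin k → ℤ, Metric.diam (T m '' Ainf) ≤ 2 * c := by
    intro m
    refine le_of_forall_pos_le_add fun ε hε => ?_
    obtain ⟨δm, hδm, hprop⟩ := hdist_image_le (hT.cont m)
      (show (0 : ℝ) < ε / 2 by linarith)
    set L : ℕ := Finset.univ.sup fun j => (m j).natAbs with hL
    have hmL : ∀ j, |m j| ≤ (L : ℤ) := by
      intro j
      rw [Int.abs_eq_natAbs, hL]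
      exact_mod_cast Finset.le_sup (f := fun j => (m j).natAbs) (Finset.mem_univ j)
    have E1 : ∀ᶠ i in Filter.atTop, ∀ j, |n (φ i) j| + (L : ℤ) ≤ (N (φ i) : ℤ) :=
      hφ.tendsto_atTop.eventually (hMargin L)
    obtain ⟨i, hi1, hi2⟩ := (E1.and (hdist δm hδm)).exists
    have hcube : m + n (φ i) ∈ cubeZ k (N (φ i)) := by
      intro j
      have h1 := abs_add_le (m j) (n (φ i) j)
      have h2 := hmL j
      have h3 := hi1 j
      have : |(m + n (φ i)) j| = |m j + n (φ i) j| := rfl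
      rw [this]
      linarith
    have h2c : Metric.diam (T m '' B (φ i)) ≤ 2 * c := by
      have h := hub (φ i) (m + n (φ i)) hcube
      rwa [himg m (n (φ i)) (A (φ i))] at h
    have hh : Metric.hausdorffDist (T m '' Ainf) (T m '' B (φ i)) ≤ ε / 2 := by
      refine hprop _ _ hAinfne (hBne _) ?_
      rw [Metric.hausdorffDist_comm]
      exact hi2
    have h1 := diam_le_add_hdist (hAinfne.image (T m)) ((hBne (φ i)).image (T m))
      ((hBc (φ i)).image (hT.cont m))
    linarith
  obtain ⟨n0, hn0⟩ := hexp Ainf hAinfc hAinfconn hAinfnt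
  linarith [hubinf n0]
end

section
/- Let (X,Z^k,T) be a continuum-wise expansive Z^k-action on a compact metric space (X,d) with expansivity constant 2c > 0. Then for every ε > 0 there exists a positive integer m = m(ε) such that every connected compact subset A of X satisfying max{diam T^n(A) : n ∈ [-m,m]^k} ≤ 2c has diam(A) < ε. -/
open Set Filter Metric MeasureTheory
open scoped ENNReal NNReal

/-- For a continuum-wise expansive `ℤ^k`-action with expansivity constant
`2c`: for every `ε > 0` there is `m > 0` such that every continuum all of whose iterates
over `[-m,m]^k` have diameter at most `2c` has diameter less than `ε`. -/
theorem cw_expansive_small_diam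
    (k : ℕ) (X : Type) [MetricSpace X] [CompactSpace X]
    (T : (Fin k → ℤ) → X → X) (hT : IsZkAction k X T) (c : ℝ) (hc : 0 < c)
    (hexp : ∀ A : Set X, IsCompact A → IsConnected A → A.Nontrivial →
      ∃ n : Fin k → ℤ, 2 * c < Metric.diam (T n '' A)) :
    ∀ ε > (0 : ℝ), ∃ m : ℕ, 0 < m ∧
      ∀ A : Set X, IsCompact A → IsConnected A →
        (∀ n ∈ cubeZ k m, Metric.diam (T n '' A) ≤ 2 * c) →
        Metric.diam A < ε := by
  
  classical
  intro ε hε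
  by_contra hcon
  push_neg at hcon
  choose A hAc hAconn hAdiam hAeps using fun j : ℕ => hcon (j + 1) (Nat.succ_pos j)
  -- package into nonempty compacts
  let B : ℕ → TopologicalSpace.NonemptyCompacts X :=
    fun j => ⟨⟨A j, hAc j⟩, (hAconn j).nonempty⟩
  obtain ⟨L, -, φ, hφ, hconv⟩ := isCompact_univ.tendsto_subseq (fun j => Set.mem_univ (B j))
  set C : Set X := (L : Set X) with hCdef
  have hCc : IsCompact C := L.isCompact
  have hCne : C.Nonempty := L.nonempty
  have hCb : Bornology.IsBounded C := hCc.isBounded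
  have hAb : ∀ j, Bornology.IsBounded (A j) := fun j => (hAc j).isBounded
  have hAne : ∀ j, (A j).Nonempty := fun j => (hAconn j).nonempty
  -- Hausdorff distances
  have hdist : ∀ j, dist (B (φ j)) L = Metric.hausdorffDist (A (φ j)) C :=
    fun j => Metric.NonemptyCompacts.dist_eq
  have hd0 : Filter.Tendsto (fun j => Metric.hausdorffDist (A (φ j)) C)
      Filter.atTop (nhds 0) := by
    have := tendsto_iff_dist_tendsto_zero.mp hconv
    simpa [Function.comp, hdist] using this
  have hne_top : ∀ j, EMetric.hausdorffEdist (A (φ j)) C ≠ ⊤ := fun j =>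
    Metric.hausdorffEdist_ne_top_of_nonempty_of_bounded (hAne (φ j)) hCne (hAb (φ j)) hCb
  have hne_top' : ∀ j, EMetric.hausdorffEdist C (A (φ j)) ≠ ⊤ := fun j => by
    rw [show EMetric.hausdorffEdist C (A (φ j)) = EMetric.hausdorffEdist (A (φ j)) C from EMetric.hausdorffEdist_comm]; exact hne_top j
  -- approximation of points of C by points of A (φ j)
  have approx : ∀ x ∈ C, ∃ u : ℕ → X, (∀ j, u j ∈ A (φ j)) ∧
      Filter.Tendsto u Filter.atTop (nhds x) := by
    intro x hx
    choose u hu hud using fun j =>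
      (hAc (φ j)).exists_infDist_eq_dist (hAne (φ j)) x
    refine ⟨u, hu, tendsto_iff_dist_tendsto_zero.mpr ?_⟩
    apply squeeze_zero (fun j => dist_nonneg)
      (fun j => ?_) hd0
    rw [dist_comm, ← hud j]
    have := Metric.infDist_le_hausdorffDist_of_mem hx (hne_top' j)
    rwa [Metric.hausdorffDist_comm] at this
  -- nearest point projections to C
  have proj : ∀ j, ∀ x ∈ A (φ j), ∃ y ∈ C,
      dist x y ≤ Metric.hausdorffDist (A (φ j)) C := by
    intro j x hx
    obtain ⟨y, hy, hyd⟩ := hCc.exists_infDist_eq_dist hCne x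
    exact ⟨y, hy, hyd ▸ Metric.infDist_le_hausdorffDist_of_mem hx (hne_top j)⟩
  -- Claim 1 : all iterates of C have diameter ≤ 2c
  have claim1 : ∀ n : Fin k → ℤ, Metric.diam (T n '' C) ≤ 2 * c := by
    intro n
    apply Metric.diam_le_of_forall_dist_le (by linarith)
    rintro _ ⟨x, hx, rfl⟩ _ ⟨y, hy, rfl⟩
    obtain ⟨u, hu, hut⟩ := approx x hx
    obtain ⟨v, hv, hvt⟩ := approx y hy
    have htend : Filter.Tendsto (fun j => dist (T n (u j)) (T n (v j)))
        Filter.atTop (nhds (dist (T n x) (T n y))) :=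
      (((hT.cont n).continuousAt.tendsto.comp hut).dist
        (((hT.cont n).continuousAt.tendsto.comp hvt)))
    refine le_of_tendsto htend ?_
    set j₀ : ℕ := Finset.univ.sup fun i => (n i).natAbs with hj₀
    filter_upwards [Filter.eventually_ge_atTop j₀] with j hj
    have hncube : n ∈ cubeZ k (φ j + 1) := by
      intro i
      have h1 : (n i).natAbs ≤ j₀ := Finset.le_sup (f := fun i => (n i).natAbs) (Finset.mem_univ i)
      have h2 : j ≤ φ j := hφ.le_apply
      have : (n i).natAbs ≤ φ j + 1 := by omega
      calc |n i| = ((n i).natAbs : ℤ) := (Int.abs_eq_natAbs _)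
        _ ≤ ((φ j + 1 : ℕ) : ℤ) := by exact_mod_cast this
    have hb : Bornology.IsBounded (T n '' A (φ j)) :=
      (((hAc (φ j)).image (hT.cont n))).isBounded
    calc dist (T n (u j)) (T n (v j))
        ≤ Metric.diam (T n '' A (φ j)) :=
          Metric.dist_le_diam_of_mem hb ⟨u j, hu j, rfl⟩ ⟨v j, hv j, rfl⟩
      _ ≤ 2 * c := hAdiam (φ j) n hncube
  -- Claim 2 : ε ≤ diam C
  have claim2 : ε ≤ Metric.diam C := by
    by_contra hlt
    push_neg at hlt
    have hpos : 0 < (ε - Metric.diam C) / 2 := by linarith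
    obtain ⟨j, hjall⟩ := Metric.tendsto_atTop.mp hd0 _ hpos
    have hj := hjall j le_rfl
    have hj' : |Metric.hausdorffDist (A (φ j)) C - 0| < (ε - Metric.diam C) / 2 :=
      Real.dist_eq _ _ ▸ hj
    have hh : Metric.hausdorffDist (A (φ j)) C < (ε - Metric.diam C) / 2 := by
      have := abs_lt.mp hj'
      linarith [this.2]
    have hdA : Metric.diam (A (φ j)) < ε := by
      have : Metric.diam (A (φ j)) ≤
          Metric.diam C + 2 * Metric.hausdorffDist (A (φ j)) C := by
        apply Metric.diam_le_of_forall_dist_le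
        · have := Metric.hausdorffDist_nonneg (s := A (φ j)) (t := C)
          have := Metric.diam_nonneg (s := C)
          linarith
        · intro x hx y hy
          obtain ⟨x', hx', hxd⟩ := proj j x hx
          obtain ⟨y', hy', hyd⟩ := proj j y hy
          have hxy : dist x' y' ≤ Metric.diam C :=
            Metric.dist_le_diam_of_mem hCb hx' hy'
          calc dist x y ≤ dist x x' + dist x' y' + dist y' y := dist_triangle4 _ _ _ _
            _ ≤ Metric.hausdorffDist (A (φ j)) C + Metric.diam C
                + Metric.hausdorffDist (A (φ j)) C := by
                rw [dist_comm y' y]; gcongr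
            _ = Metric.diam C + 2 * Metric.hausdorffDist (A (φ j)) C := by ring
      linarith
    exact absurd (hAeps (φ j)) (not_le.mpr hdA)
  -- C is nontrivial
  have hnontriv : C.Nontrivial := by
    by_contra h
    rw [Set.not_nontrivial_iff] at h
    have := Metric.diam_subsingleton h
    linarith [claim2]
  -- C is connected
  have hconn : IsConnected C := by
    refine ⟨hCne, ?_⟩
    intro u v hu hv huv hcu hcv
    by_contra hempty
    rw [Set.not_nonempty_iff_eq_empty] at hempty
    set S₁ : Set X := C \ v with hS₁
    set S₂ : Set X := C \ u with hS₂
    have hS₁c : IsCompact S₁ := hCc.diff hv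
    have hS₂c : IsCompact S₂ := hCc.diff hu
    have hdisj : Disjoint S₁ S₂ := by
      rw [Set.disjoint_left]
      rintro x ⟨hxC, hxv⟩ ⟨-, hxu⟩
      rcases huv hxC with h | h
      · exact hxu h
      · exact hxv h
    obtain ⟨δ, hδ, hth⟩ := hdisj.exists_thickenings hS₁c hS₂c.isClosed
    obtain ⟨j, hjall⟩ := Metric.tendsto_atTop.mp hd0 δ hδ
    have hj := hjall j le_rfl
    have hjlt : Metric.hausdorffDist (A (φ j)) C < δ := by
      have := abs_lt.mp (Real.dist_eq _ _ ▸ hj)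
      linarith [this.2]
    have hcover : A (φ j) ⊆ Metric.thickening δ S₁ ∪ Metric.thickening δ S₂ := by
      intro z hz
      obtain ⟨w, hw, hwd⟩ := Metric.exists_dist_lt_of_hausdorffDist_lt hz hjlt (hne_top j)
      have hw12 : w ∈ S₁ ∪ S₂ := by
        by_cases h1 : w ∈ v
        · right
          refine ⟨hw, fun h2 => ?_⟩
          have : w ∈ C ∩ (u ∩ v) := ⟨hw, h2, h1⟩
          simp [hempty] at this
        · exact Or.inl ⟨hw, h1⟩
      rcases hw12 with h | h
      · exact Or.inl (Metric.mem_thickening_iff.mpr ⟨w, h, hwd⟩)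
      · exact Or.inr (Metric.mem_thickening_iff.mpr ⟨w, h, hwd⟩)
    have hmeet : ∀ S : Set X, S ⊆ C → S.Nonempty →
        (A (φ j) ∩ Metric.thickening δ S).Nonempty := by
      rintro S hS ⟨a, ha⟩
      obtain ⟨a', ha', had⟩ := Metric.exists_dist_lt_of_hausdorffDist_lt' (hS ha) hjlt (hne_top j)
      exact ⟨a', ha', Metric.mem_thickening_iff.mpr ⟨a, ha, had⟩⟩
    have hS₁ne : S₁.Nonempty := by
      obtain ⟨a, haC, hau⟩ := hcu
      refine ⟨a, haC, fun hv' => ?_⟩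
      have : a ∈ C ∩ (u ∩ v) := ⟨haC, hau, hv'⟩
      simp [hempty] at this
    have hS₂ne : S₂.Nonempty := by
      obtain ⟨b, hbC, hbv⟩ := hcv
      refine ⟨b, hbC, fun hu' => ?_⟩
      have : b ∈ C ∩ (u ∩ v) := ⟨hbC, hu', hbv⟩
      simp [hempty] at this
    have := (hAconn (φ j)).isPreconnected
      (Metric.thickening δ S₁) (Metric.thickening δ S₂)
      Metric.isOpen_thickening Metric.isOpen_thickening
      hcover
      (hmeet S₁ Set.diff_subset hS₁ne)
      (hmeet S₂ Set.diff_subset hS₂ne)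
    obtain ⟨z, -, hz1, hz2⟩ := this
    exact Set.disjoint_left.mp hth hz1 hz2
  -- contradiction with continuum-wise expansivity
  obtain ⟨n, hn⟩ := hexp C hCc hconn hnontriv
  exact absurd (claim1 n) (not_le.mpr hn)
end

section
/- Let X be a compact metric space, ρ a compatible metric on X, and c > 0. Let V be a finite closed cover of X such that every connected component of every member of V has ρ-diameter strictly less than 2c. Then there exists a finite closed cover W of X such that mesh(W,ρ) < 2c, ord(W) ≤ ord(V), and each member of W is contained in some member of V (i.e., W refines V). -/
open Set Filter Metric MeasureTheory
open scoped ENNReal NNReal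

/-- In a compact Hausdorff space, any open set containing a connected component
contains a clopen set containing the point. -/
lemma exists_isClopen_of_connectedComponent_subset {Y : Type*} [TopologicalSpace Y]
    [T2Space Y] [CompactSpace Y] {x : Y} {U : Set Y} (hU : IsOpen U)
    (h : connectedComponent x ⊆ U) : ∃ s : Set Y, IsClopen s ∧ x ∈ s ∧ s ⊆ U := by
  rw [connectedComponent_eq_iInter_isClopen] at h
  have H1 := hU.isClosed_compl.isCompact.inter_iInter_nonempty
    (fun s : { s : Set Y // IsClopen s ∧ x ∈ s } => (s : Set Y)) (fun s => s.2.1.1)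
  rw [← not_disjoint_iff_nonempty_inter, imp_not_comm, not_forall] at H1
  obtain ⟨si, H2⟩ := H1 (disjoint_compl_left_iff_subset.2 h)
  refine ⟨⋂ s ∈ si, (s : Set Y), isClopen_biInter_finset fun s _ => s.2.1,
    mem_iInter₂.2 fun s _ => s.2.2, ?_⟩
  rwa [← disjoint_compl_left_iff_subset, disjoint_iff_inter_eq_empty,
    ← not_nonempty_iff_eq_empty]

lemma partialSups_isClopen {Y : Type*} [TopologicalSpace Y] {f : ℕ → Set Y}
    (hf : ∀ i, IsClopen (f i)) (n : ℕ) : IsClopen (partialSups f n) := by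
  induction n with
  | zero => simpa using hf 0
  | succ n ih => rw [partialSups_add_one]; exact ih.union (hf (n + 1))

lemma disjointed_isClopen {Y : Type*} [TopologicalSpace Y] {f : ℕ → Set Y}
    (hf : ∀ i, IsClopen (f i)) (n : ℕ) : IsClopen (disjointed f n) := by
  cases n with
  | zero => simpa [disjointed_zero] using hf 0
  | succ n =>
    rw [disjointed_add_one]
    exact (hf (n + 1)).diff (partialSups_isClopen hf n)

/-- Decomposition of a closed set with small components into finitely many
disjoint closed pieces of small diameter. -/
lemma decompose_closed_small_components {X : Type} [MetricSpace X] [CompactSpace X]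
    {c : ℝ} (hc : 0 < c) {V : Set X} (hV : IsClosed V)
    (h : ∀ x ∈ V, Metric.diam (connectedComponentIn V x) < 2 * c) :
    ∃ 𝒬 : Set (Set X), 𝒬.Finite ∧ (∀ Q ∈ 𝒬, IsClosed Q ∧ Q ⊆ V ∧ Metric.diam Q < 2 * c) ∧
      ⋃₀ 𝒬 = V ∧ ∀ Q₁ ∈ 𝒬, ∀ Q₂ ∈ 𝒬, Q₁ ≠ Q₂ → Disjoint Q₁ Q₂ := by
  have hVc : IsCompact V := hV.isCompact
  haveI : CompactSpace V := isCompact_iff_compactSpace.mp hVc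
  -- every set in V is bounded
  have hbdd : ∀ A : Set V, Bornology.IsBounded A :=
    fun A => (isCompact_univ.isBounded).subset (subset_univ A)
  have hdiam_im : ∀ A : Set V, Metric.diam (Subtype.val '' A) = Metric.diam A :=
    fun A => Isometry.diam_image isometry_subtype_coe A
  -- step 1: clopen neighborhoods of small diameter
  have step1 : ∀ x : V, ∃ s : Set V, IsClopen s ∧ x ∈ s ∧ Metric.diam s < 2 * c := by
    intro x
    set C := connectedComponent x with hC
    have hCd : Metric.diam C < 2 * c := by
      have := h x.1 x.2
      rwa [connectedComponentIn_eq_image x.2, hdiam_im] at this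
    set δ := (2 * c - Metric.diam C) / 3 with hδ
    have hδpos : 0 < δ := by rw [hδ]; linarith
    have hsub : C ⊆ thickening δ C := self_subset_thickening hδpos C
    obtain ⟨s, hs_clopen, hxs, hsU⟩ := exists_isClopen_of_connectedComponent_subset
      isOpen_thickening hsub
    refine ⟨s, hs_clopen, hxs, ?_⟩
    calc Metric.diam s ≤ Metric.diam (thickening δ C) :=
          Metric.diam_mono hsU (hbdd _)
      _ ≤ Metric.diam C + 2 * δ := Metric.diam_thickening_le _ hδpos.le
      _ < 2 * c := by rw [hδ]; linarith
  choose s hs_clopen hs_mem hs_diam using step1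
  -- step 2: finite subcover
  obtain ⟨t, ht⟩ := isCompact_univ.elim_finite_subcover s (fun x => (hs_clopen x).2)
    (fun x _ => mem_iUnion.2 ⟨x, hs_mem x⟩)
  set n := t.card with hn
  set e : Fin n → V := fun i => (t.equivFin.symm i : V) with he
  set f : ℕ → Set V := fun i => if hi : i < n then s (e ⟨i, hi⟩) else ∅ with hf
  have hf_clopen : ∀ i, IsClopen (f i) := by
    intro i; rw [hf]; dsimp only
    split
    · exact hs_clopen _
    · exact isClopen_empty
  have hf_union : ⋃ i, f i = univ := by
    apply eq_univ_of_forall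
    intro z
    obtain ⟨x, hxt, hzx⟩ := mem_iUnion₂.1 (ht (mem_univ z))
    refine mem_iUnion.2 ⟨(t.equivFin ⟨x, hxt⟩ : ℕ), ?_⟩
    have hlt : (t.equivFin ⟨x, hxt⟩ : ℕ) < n := (t.equivFin ⟨x, hxt⟩).2
    rw [hf]; dsimp only
    rw [dif_pos hlt]
    have : e ⟨(t.equivFin ⟨x, hxt⟩ : ℕ), hlt⟩ = x := by
      rw [he]; dsimp only
      rw [Fin.eta, Equiv.symm_apply_apply]
    rwa [this]
  set g : ℕ → Set V := disjointed f with hg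
  have hg_le : ∀ i, g i ⊆ f i := fun i => disjointed_le f i
  have hg_clopen : ∀ i, IsClopen (g i) := disjointed_isClopen hf_clopen
  have hg_union : ⋃ i, g i = univ := by rw [hg, iUnion_disjointed, hf_union]
  have hg_empty : ∀ i, n ≤ i → g i = ∅ := by
    intro i hi
    have : f i = ∅ := by rw [hf]; dsimp only; rw [dif_neg (not_lt.2 hi)]
    exact eq_empty_of_subset_empty (this ▸ hg_le i)
  -- the pieces in X
  refine ⟨(fun i : Fin n => Subtype.val '' g i) '' univ, (finite_univ).image _, ?_, ?_, ?_⟩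
  · rintro Q ⟨i, -, rfl⟩
    refine ⟨?_, Subtype.coe_image_subset V (g i), ?_⟩
    · exact (((hg_clopen i).1.isCompact).image continuous_subtype_val).isClosed
    · rw [hdiam_im]
      calc Metric.diam (g i) ≤ Metric.diam (f i) := Metric.diam_mono (hg_le i) (hbdd _)
        _ < 2 * c := by
            rw [hf]; dsimp only
            split
            · exact hs_diam _
            · simpa using by positivity
  · ext z
    constructor
    · rintro ⟨Q, ⟨i, -, rfl⟩, hz⟩
      exact (Subtype.coe_image_subset V (g i)) hz
    · intro hz
      have : (⟨z, hz⟩ : V) ∈ ⋃ i, g i := hg_union ▸ mem_univ _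
      obtain ⟨i, hi⟩ := mem_iUnion.1 this
      have hin : i < n := by
        by_contra hge
        rw [hg_empty i (not_lt.1 hge)] at hi
        exact hi
      exact ⟨Subtype.val '' g i, ⟨⟨i, hin⟩, mem_univ _, rfl⟩, ⟨⟨z, hz⟩, hi, rfl⟩⟩
  · rintro Q₁ ⟨i, -, rfl⟩ Q₂ ⟨j, -, rfl⟩ hne
    have hij : (i : ℕ) ≠ (j : ℕ) := by
      intro hij
      exact hne (by rw [Fin.val_injective hij])
    exact Set.disjoint_image_of_injective Subtype.val_injective ((disjoint_disjointed f) hij)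


lemma meshBy_lt_of_forall_diam_lt {X : Type} [MetricSpace X] [CompactSpace X]
    {𝒲 : Set (Set X)} {c : ℝ} (hc : 0 < c) (hfin : 𝒲.Finite)
    (hd : ∀ W ∈ 𝒲, Metric.diam W < 2 * c) : meshBy dist 𝒲 < 2 * c := by
  have hbddX : ∀ W : Set X, Bornology.IsBounded W :=
    fun W => isCompact_univ.isBounded.subset (subset_univ W)
  have hdiamBy : ∀ W : Set X, diamBy dist W ≤ Metric.diam W := by
    intro W
    refine Real.iSup_le (fun x => Real.iSup_le (fun hx => Real.iSup_le (fun y =>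
      Real.iSup_le (fun hy => Metric.dist_le_diam_of_mem (hbddX W) hx hy)
      Metric.diam_nonneg) Metric.diam_nonneg) Metric.diam_nonneg) Metric.diam_nonneg
  rcases eq_empty_or_nonempty 𝒲 with h | h
  · have : meshBy dist 𝒲 = 0 := by
      rw [meshBy, h]
      have h0 : ∀ W : Set X, (⨆ _ : W ∈ (∅ : Set (Set X)), diamBy dist W) = 0 := by
        intro W
        haveI : IsEmpty (W ∈ (∅ : Set (Set X))) := ⟨fun h => Set.notMem_empty W h⟩
        exact Real.iSup_of_isEmpty _
      simpa [h0] using ciSup_const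
    rw [this]; linarith
  · obtain ⟨W₀, hW₀, hmax⟩ := Set.exists_max_image 𝒲 Metric.diam hfin h
    calc meshBy dist 𝒲 ≤ Metric.diam W₀ :=
          Real.iSup_le (fun W => Real.iSup_le (fun hW => (hdiamBy W).trans (hmax W hW))
            Metric.diam_nonneg) Metric.diam_nonneg
      _ < 2 * c := hd W₀ hW₀

lemma ordCover_le_of_ncard_le {X : Type} {𝒲 𝒱 : Set (Set X)} (h𝒱fin : 𝒱.Finite)
    (hpt : ∀ x : X, {U | U ∈ 𝒲 ∧ x ∈ U}.ncard ≤ {U | U ∈ 𝒱 ∧ x ∈ U}.ncard) :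
    ordCover X 𝒲 ≤ ordCover X 𝒱 := by
  rw [ordCover, ordCover]
  refine ciSup_mono ⟨𝒱.ncard, ?_⟩ (fun x => Nat.sub_le_sub_right (hpt x) 1)
  rintro _ ⟨x, rfl⟩
  exact le_trans (Nat.sub_le _ _) (Set.ncard_le_ncard (fun V hV => hV.1) h𝒱fin)

/-- If every connected component of every member of a finite closed cover
`𝒱` of a compact metric space has diameter less than `2c`, then there is a finite closed
cover `𝒲` refining `𝒱` with `mesh(𝒲) < 2c` and `ord(𝒲) ≤ ord(𝒱)`. -/
theorem closed_cover_small_components_refinement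
    (X : Type) [MetricSpace X] [CompactSpace X] (c : ℝ) (hc : 0 < c)
    (𝒱 : Set (Set X)) (h𝒱 : IsFinClosedCover X 𝒱)
    (hcomp : ∀ V ∈ 𝒱, ∀ x ∈ V, Metric.diam (connectedComponentIn V x) < 2 * c) :
    ∃ 𝒲 : Set (Set X), IsFinClosedCover X 𝒲 ∧
      meshBy dist 𝒲 < 2 * c ∧
      ordCover X 𝒲 ≤ ordCover X 𝒱 ∧
      ∀ W ∈ 𝒲, ∃ V ∈ 𝒱, W ⊆ V := by
  obtain ⟨h𝒱fin, h𝒱cl, h𝒱cov⟩ := h𝒱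
  have key : ∀ V ∈ 𝒱, ∃ 𝒬 : Set (Set X), 𝒬.Finite ∧
      (∀ Q ∈ 𝒬, IsClosed Q ∧ Q ⊆ V ∧ Metric.diam Q < 2 * c) ∧
      ⋃₀ 𝒬 = V ∧ ∀ Q₁ ∈ 𝒬, ∀ Q₂ ∈ 𝒬, Q₁ ≠ Q₂ → Disjoint Q₁ Q₂ :=
    fun V hV => decompose_closed_small_components hc (h𝒱cl V hV) (fun x hx => hcomp V hV x hx)
  choose! Q hQfin hQprop hQcov hQdisj using key
  set 𝒲 : Set (Set X) := ⋃ V ∈ 𝒱, Q V with h𝒲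
  have h𝒲fin : 𝒲.Finite := h𝒱fin.biUnion (fun V hV => hQfin V hV)
  have hWmem : ∀ W ∈ 𝒲, ∃ V ∈ 𝒱, W ∈ Q V := fun W hW => by
    simpa using mem_iUnion₂.1 hW
  choose! vmap hvmap1 hvmap2 using hWmem
  have hWsub : ∀ W ∈ 𝒲, W ⊆ vmap W := fun W hW => by
    intro y hy
    have : y ∈ ⋃₀ Q (vmap W) := ⟨W, hvmap2 W hW, hy⟩
    rwa [hQcov _ (hvmap1 W hW)] at this
  have hdW : ∀ W ∈ 𝒲, Metric.diam W < 2 * c :=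
    fun W hW => (hQprop _ (hvmap1 W hW) W (hvmap2 W hW)).2.2
  refine ⟨𝒲, ⟨h𝒲fin, ?_, ?_⟩, ?_, ?_, ?_⟩
  · exact fun W hW => (hQprop _ (hvmap1 W hW) W (hvmap2 W hW)).1
  · apply eq_univ_of_forall
    intro x
    obtain ⟨V, hV, hxV⟩ : x ∈ ⋃₀ 𝒱 := h𝒱cov ▸ mem_univ x
    obtain ⟨W, hWQ, hxW⟩ : x ∈ ⋃₀ Q V := by rw [hQcov V hV]; exact hxV
    exact ⟨W, mem_iUnion₂.2 ⟨V, hV, hWQ⟩, hxW⟩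
  · exact meshBy_lt_of_forall_diam_lt hc h𝒲fin hdW
  · refine ordCover_le_of_ncard_le h𝒱fin (fun x => ?_)
    refine Set.ncard_le_ncard_of_injOn vmap ?_ ?_ (h𝒱fin.subset (fun V hV => hV.1))
    · rintro W ⟨hW, hxW⟩
      exact ⟨hvmap1 W hW, hWsub W hW hxW⟩
    · rintro W₁ ⟨h1, hx1⟩ W₂ ⟨h2, hx2⟩ heq
      by_contra hne
      have hd := hQdisj (vmap W₁) (hvmap1 _ h1) W₁ (hvmap2 _ h1) W₂
        (by rw [heq]; exact hvmap2 _ h2) hne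
      exact Set.disjoint_left.mp hd hx1 hx2
  · exact fun W hW => ⟨vmap W, hvmap1 W hW, hWsub W hW⟩
end

section
/- Let (X,Z^k,T) be a continuum-wise expansive Z^k-action on a compact metric space (X,d) with expansivity constant 2c > 0, and let δ > 0 be such that for every connected compact A ⊆ X and N ≥ 1, c ≤ max{diam T^n(A) : n ∈ [-N,N]^k} ≤ 2c implies max{diam T^n(A) : n ∈ ∂[-N,N]^k} > δ. Then for every N ≥ 1 and every connected compact subset A of X: if max{diam T^n(A) : n ∈ ∂[-N,N]^k} < δ/2, then max{diam T^n(A) : n ∈ [-N,N]^k} < 2c. -/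
open Set Filter Metric MeasureTheory
open scoped ENNReal NNReal

/-- Boundary-bumping style lemma: in a continuum `K` containing points `p, q` with
`dist p q > c`, the connected component of `p` in `K ∩ closedBall p c` is a subcontinuum
containing `p`, contained in `closedBall p c`, and reaching distance `≥ c` from `p`. -/
lemma aux_subcontinuum {X : Type} [MetricSpace X] {K : Set X} (hK : IsCompact K)
    (hKconn : IsConnected K) {p q : X} (hp : p ∈ K) (hq : q ∈ K) {c : ℝ}
    (hc : 0 ≤ c) (hpq : c < dist p q) :
    ∃ C : Set X, C ⊆ K ∧ IsCompact C ∧ IsConnected C ∧ p ∈ C ∧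
      C ⊆ Metric.closedBall p c ∧ ∃ x ∈ C, c ≤ dist p x := by
  classical
  set E : Set X := K ∩ Metric.closedBall p c with hE_def
  have hE : IsCompact E := hK.inter_right Metric.isClosed_closedBall
  have hpE : p ∈ E := ⟨hp, Metric.mem_closedBall_self hc⟩
  haveI : CompactSpace E := isCompact_iff_compactSpace.mp hE
  set p' : E := ⟨p, hpE⟩ with hp'_def
  set C' : Set E := connectedComponent p' with hC'_def
  have hC'closed : IsClosed C' := isClosed_connectedComponent
  have hC'comp : IsCompact C' := hC'closed.isCompact
  have hEsubK : E ⊆ K := Set.inter_subset_left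
  refine ⟨Subtype.val '' C', (Set.image_subset_iff.mpr (fun x _ => x.2.1)), 
    hC'comp.image continuous_subtype_val,
    (isConnected_connectedComponent).image _ continuous_subtype_val.continuousOn,
    ⟨p', mem_connectedComponent, rfl⟩,
    Set.image_subset_iff.mpr (fun x _ => x.2.2), ?_⟩
  by_contra hcon
  push_neg at hcon
  -- so every point of the component is at distance < c from p
  set U : Set E := {x : E | dist p (x : X) < c} with hU_def
  have hUopen : IsOpen U := isOpen_lt (continuous_const.dist continuous_subtype_val) continuous_const
  have hC'U : C' ⊆ U := by
    intro x hx
    exact hcon (x : X) ⟨x, hx, rfl⟩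
  have heq := connectedComponent_eq_iInter_isClopen p'
  -- extract a clopen set D with p' ∈ D ⊆ U
  have hempty : Uᶜ ∩ ⋂ Z : {s : Set E // IsClopen s ∧ p' ∈ s}, (Z : Set E) = ∅ := by
    rw [← heq]
    apply Set.eq_empty_of_forall_notMem
    intro x hx
    exact hx.1 (hC'U hx.2)
  obtain ⟨t, ht⟩ := (hUopen.isClosed_compl.isCompact).elim_finite_subfamily_closed
    (fun Z : {s : Set E // IsClopen s ∧ p' ∈ s} => (Z : Set E)) (fun Z => Z.2.1.1) hempty
  set D : Set E := ⋂ Z ∈ t, (Z : Set E) with hD_def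
  have hDclopen : IsClopen D := isClopen_biInter_finset (fun Z _ => Z.2.1)
  have hpD : p' ∈ D := Set.mem_iInter₂.mpr (fun Z _ => Z.2.2)
  have hDU : D ⊆ U := by
    intro x hx
    by_contra hxU
    exact Set.eq_empty_iff_forall_notMem.mp ht x ⟨hxU, hx⟩
  -- push D down to X
  set D₀ : Set X := Subtype.val '' D with hD₀_def
  have hD₀comp : IsCompact D₀ := (hDclopen.1.isCompact).image continuous_subtype_val
  have hD₀closed : IsClosed D₀ := hD₀comp.isClosed
  have hD₀ball : D₀ ⊆ Metric.ball p c := by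
    rintro x ⟨y, hy, rfl⟩
    have := hDU hy
    exact Metric.mem_ball.mpr (by rw [dist_comm]; exact this)
  obtain ⟨V, hVopen, hVD⟩ := isOpen_induced_iff.mp hDclopen.2
  have hD₀eq : D₀ = (V ∩ Metric.ball p c) ∩ K := by
    apply Set.Subset.antisymm
    · rintro x ⟨y, hy, rfl⟩
      refine ⟨⟨?_, hD₀ball ⟨y, hy, rfl⟩⟩, y.2.1⟩
      have : y ∈ Subtype.val ⁻¹' V := hVD ▸ hy
      exact this
    · rintro x ⟨⟨hxV, hxball⟩, hxK⟩
      have hxE : x ∈ E := ⟨hxK, Metric.ball_subset_closedBall hxball⟩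
      refine ⟨⟨x, hxE⟩, ?_, rfl⟩
      rw [← hVD]
      exact hxV
  -- D₀ gives a nontrivial clopen subset of the connected set K
  haveI : ConnectedSpace K := Subtype.connectedSpace hKconn
  set G : Set K := Subtype.val ⁻¹' D₀ with hG_def
  have hGopen : IsOpen G := by
    have h1 : G = Subtype.val ⁻¹' (V ∩ Metric.ball p c) := by
      ext x
      simp only [hG_def, Set.mem_preimage, hD₀eq, Set.mem_inter_iff]
      exact ⟨fun h => h.1, fun h => ⟨h, x.2⟩⟩
    rw [h1]
    exact (hVopen.inter Metric.isOpen_ball).preimage continuous_subtype_val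
  have hGclosed : IsClosed G := hD₀closed.preimage continuous_subtype_val
  rcases isClopen_iff.mp ⟨hGclosed, hGopen⟩ with hG0 | hG1
  · have : (⟨p, hp⟩ : K) ∈ G := ⟨p', hpD, rfl⟩
    rw [hG0] at this
    exact this
  · have : (⟨q, hq⟩ : K) ∈ G := by rw [hG1]; trivial
    have hqD₀ : q ∈ D₀ := this
    have := hD₀ball hqD₀
    rw [Metric.mem_ball, dist_comm] at this
    linarith

/-- The intersection of a nonempty chain of nonempty compact connected sets in a metric
space is a nonempty compact connected set. -/
lemma aux_sInter_chain {X : Type} [MetricSpace X] {𝒞 : Set (Set X)}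
    (hne : 𝒞.Nonempty) (hchain : IsChain (· ⊆ ·) 𝒞)
    (hcomp : ∀ B ∈ 𝒞, IsCompact B) (hconn : ∀ B ∈ 𝒞, IsConnected B) :
    IsConnected (⋂₀ 𝒞) := by
  classical
  haveI : Nonempty ↥𝒞 := hne.to_subtype
  have hdirOn : DirectedOn (· ⊇ ·) 𝒞 := by
    intro a ha b hb
    rcases eq_or_ne a b with rfl | hab
    · exact ⟨a, ha, subset_rfl, subset_rfl⟩
    rcases hchain ha hb hab with h | h
    · exact ⟨a, ha, subset_rfl, h⟩
    · exact ⟨b, hb, h, subset_rfl⟩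
  have hIne : (⋂₀ 𝒞).Nonempty :=
    IsCompact.nonempty_sInter_of_directed_nonempty_isCompact_isClosed hdirOn
      (fun B hB => (hconn B hB).nonempty) hcomp (fun B hB => (hcomp B hB).isClosed)
  have hIclosed : IsClosed (⋂₀ 𝒞) := isClosed_sInter (fun B hB => (hcomp B hB).isClosed)
  refine ⟨hIne, ?_⟩
  rw [isPreconnected_iff_subset_of_fully_disjoint_closed hIclosed]
  intro u v hu hv hsub hdisj
  by_contra hcontra
  push_neg at hcontra
  obtain ⟨hnu, hnv⟩ := hcontra
  have hF1ne : (⋂₀ 𝒞 ∩ u).Nonempty := by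
    rcases Set.not_subset.mp hnv with ⟨x, hx, hxv⟩
    rcases hsub hx with h | h
    · exact ⟨x, hx, h⟩
    · exact absurd h hxv
  have hF2ne : (⋂₀ 𝒞 ∩ v).Nonempty := by
    rcases Set.not_subset.mp hnu with ⟨x, hx, hxu⟩
    rcases hsub hx with h | h
    · exact absurd h hxu
    · exact ⟨x, hx, h⟩
  obtain ⟨Bw, hBw⟩ := hne
  have hF1comp : IsCompact (⋂₀ 𝒞 ∩ u) :=
    ((hcomp Bw hBw).of_isClosed_subset (hIclosed.inter hu) 
      (fun x hx => hx.1 Bw hBw))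
  have hF2comp : IsCompact (⋂₀ 𝒞 ∩ v) :=
    ((hcomp Bw hBw).of_isClosed_subset (hIclosed.inter hv) 
      (fun x hx => hx.1 Bw hBw))
  have hFdisj : Disjoint (⋂₀ 𝒞 ∩ u) (⋂₀ 𝒞 ∩ v) :=
    Set.disjoint_of_subset (Set.inter_subset_right) (Set.inter_subset_right) hdisj
  obtain ⟨U, V, hUopen, hVopen, hF1U, hF2V, hUV⟩ :=
    SeparatedNhds.of_isCompact_isCompact hF1comp hF2comp hFdisj
  -- some element of the chain is inside U ∪ V
  have hB1 : ∃ B ∈ 𝒞, B ⊆ U ∪ V := by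
    by_contra hcon
    push_neg at hcon
    have hGne : ∀ B : ↥𝒞, (B.1 \ (U ∪ V)).Nonempty := by
      intro B
      rcases Set.not_subset.mp (hcon B.1 B.2) with ⟨x, hx, hx'⟩
      exact ⟨x, hx, hx'⟩
    have hdir : Directed (· ⊇ ·) (fun B : ↥𝒞 => B.1 \ (U ∪ V)) := by
      rintro B B'
      rcases hdirOn B.1 B.2 B'.1 B'.2 with ⟨Z, hZ, h1, h2⟩
      exact ⟨⟨Z, hZ⟩, Set.diff_subset_diff_left h1, Set.diff_subset_diff_left h2⟩
    obtain ⟨z, hz⟩ := IsCompact.nonempty_iInter_of_directed_nonempty_isCompact_isClosed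
      _ hdir hGne
      (fun B => (hcomp B.1 B.2).inter_right (hUopen.union hVopen).isClosed_compl)
      (fun B => ((hcomp B.1 B.2).isClosed).inter (hUopen.union hVopen).isClosed_compl)
    have hzI : z ∈ ⋂₀ 𝒞 := by
      intro B hB
      exact (Set.mem_iInter.mp hz ⟨B, hB⟩).1
    have hzUV : z ∉ U ∪ V := (Set.mem_iInter.mp hz ⟨Bw, hBw⟩).2
    rcases hsub hzI with h | h
    · exact hzUV (Or.inl (hF1U ⟨hzI, h⟩))
    · exact hzUV (Or.inr (hF2V ⟨hzI, h⟩))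
  obtain ⟨B1, hB1mem, hB1sub⟩ := hB1
  have hIB1 : ⋂₀ 𝒞 ⊆ B1 := Set.sInter_subset_of_mem hB1mem
  have := (hconn B1 hB1mem).isPreconnected U V hUopen hVopen hB1sub
    ⟨hF1ne.choose, hIB1 hF1ne.choose_spec.1, hF1U hF1ne.choose_spec⟩
    ⟨hF2ne.choose, hIB1 hF2ne.choose_spec.1, hF2V hF2ne.choose_spec⟩
  rcases this with ⟨x, _, hxU, hxV⟩
  exact (Set.disjoint_left.mp hUV hxU) hxV

/-- For a continuum-wise expansive `ℤ^k`-action with expansivity constant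
`2c` and `δ > 0` as in Statement 9: if all boundary iterates of a continuum `A` have
diameter less than `δ/2`, then all iterates of `A` over the cube have diameter
less than `2c`. -/
theorem small_boundary_diam_implies_small_cube_diam
    (k : ℕ) (X : Type) [MetricSpace X] [CompactSpace X]
    (T : (Fin k → ℤ) → X → X) (hT : IsZkAction k X T) (c : ℝ) (hc : 0 < c)
    (hexp : ∀ A : Set X, IsCompact A → IsConnected A → A.Nontrivial →
      ∃ n : Fin k → ℤ, 2 * c < Metric.diam (T n '' A))
    (δ : ℝ) (hδ : 0 < δ)
    (hδprop : ∀ A : Set X, IsCompact A → IsConnected A → ∀ N : ℕ, 1 ≤ N →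
      (∃ n ∈ cubeZ k N, c ≤ Metric.diam (T n '' A)) →
      (∀ n ∈ cubeZ k N, Metric.diam (T n '' A) ≤ 2 * c) →
      ∃ n ∈ cubeBoundary k N, δ < Metric.diam (T n '' A)) :
    ∀ N : ℕ, 1 ≤ N → ∀ A : Set X, IsCompact A → IsConnected A →
      (∀ n ∈ cubeBoundary k N, Metric.diam (T n '' A) < δ / 2) →
      ∀ n ∈ cubeZ k N, Metric.diam (T n '' A) < 2 * c := by
  classical
  intro N hN A hAcomp hAconn hbound
  by_contra hcon
  push_neg at hcon
  obtain ⟨n1, hn1cube, hn1⟩ := hcon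
  -- basic facts about the action
  have hTinv : ∀ (n : Fin k → ℤ) (x : X), T (-n) (T n x) = x := by
    intro n x
    have h1 : T (-n + n) = T (-n) ∘ T n := hT.add _ _
    rw [neg_add_cancel, hT.zero] at h1
    exact (congrFun h1 x).symm
  have hTinv' : ∀ (n : Fin k → ℤ) (x : X), T n (T (-n) x) = x := by
    intro n x
    have h1 : T (n + -n) = T n ∘ T (-n) := hT.add _ _
    rw [add_neg_cancel, hT.zero] at h1
    exact (congrFun h1 x).symm
  have himgc : ∀ (n : Fin k → ℤ) (s : Set X), IsCompact s → IsCompact (T n '' s) :=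
    fun n s hs => hs.image (hT.cont n)
  have hbded : ∀ (n : Fin k → ℤ) (s : Set X), IsCompact s →
      Bornology.IsBounded (T n '' s) := fun n s hs => (himgc n s hs).isBounded
  have himg : ∀ (n : Fin k → ℤ) (s : Set X), T n '' (T (-n) '' s) = s := by
    intro n s
    ext x
    constructor
    · rintro ⟨y, ⟨z, hz, rfl⟩, rfl⟩
      rwa [hTinv']
    · intro hx
      exact ⟨T (-n) x, ⟨x, hx, rfl⟩, hTinv' n x⟩
  have hcubefin : (cubeZ k N).Finite := by
    apply (Set.Finite.pi (fun _ : Fin k => Set.finite_Icc (-(N : ℤ)) (N : ℤ))).subset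
    intro n hn
    rw [Set.mem_pi]
    intro i _
    rw [Set.mem_Icc, ← abs_le]
    exact hn i
  -- the family of subcontinua with a large iterate over the cube
  set S : Set (Set X) := {B | B ⊆ A ∧ IsCompact B ∧ IsConnected B ∧
    ∃ n ∈ cubeZ k N, c ≤ Metric.diam (T n '' B)} with hS_def
  have hAS : A ∈ S := ⟨subset_rfl, hAcomp, hAconn, n1, hn1cube, by linarith⟩
  -- Zorn's lemma: every chain in S has a lower bound in S
  have hZorn : ∀ 𝒞 ⊆ S, IsChain (· ⊆ ·) 𝒞 → 𝒞.Nonempty →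
      ∃ lb ∈ S, ∀ s ∈ 𝒞, lb ⊆ s := by
    intro 𝒞 h𝒞S hchain hne
    haveI : Nonempty ↥𝒞 := hne.to_subtype
    obtain ⟨Bw, hBw⟩ := hne
    have hIsub : ∀ B ∈ 𝒞, ⋂₀ 𝒞 ⊆ B := fun B hB => Set.sInter_subset_of_mem hB
    have hIclosed : IsClosed (⋂₀ 𝒞) :=
      isClosed_sInter (fun B hB => (h𝒞S hB).2.1.isClosed)
    have hIcomp : IsCompact (⋂₀ 𝒞) :=
      (h𝒞S hBw).2.1.of_isClosed_subset hIclosed (hIsub Bw hBw)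
    have hIconn : IsConnected (⋂₀ 𝒞) :=
      aux_sInter_chain ⟨Bw, hBw⟩ hchain (fun B hB => (h𝒞S hB).2.1)
        (fun B hB => (h𝒞S hB).2.2.1)
    -- find a single n ∈ cube that works for all members of the chain
    set W : Set X → Set (Fin k → ℤ) :=
      fun B => {n | n ∈ cubeZ k N ∧ c ≤ Metric.diam (T n '' B)} with hW_def
    have hWfin : ∀ B, (W B).Finite := fun B => hcubefin.subset (fun n hn => hn.1)
    have hWne : ∀ B ∈ 𝒞, (W B).Nonempty := by
      intro B hB
      obtain ⟨n, hn, hd⟩ := (h𝒞S hB).2.2.2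
      exact ⟨n, hn, hd⟩
    have hWmono : ∀ B ∈ 𝒞, ∀ B' ∈ 𝒞, B ⊆ B' → W B ⊆ W B' := by
      intro B hB B' hB' hsub n hn
      exact ⟨hn.1, hn.2.trans (Metric.diam_mono (Set.image_mono hsub)
        (hbded n B' (h𝒞S hB').2.1))⟩
    have hMne : Set.Nonempty {m | ∃ B ∈ 𝒞, (W B).ncard = m} := ⟨(W Bw).ncard, Bw, hBw, rfl⟩
    obtain ⟨B0, hB0mem, hB0card⟩ := Nat.sInf_mem hMne
    have hB0min : ∀ B ∈ 𝒞, W B0 ⊆ W B := by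
      intro B hB
      rcases eq_or_ne B0 B with rfl | hne'
      · exact subset_rfl
      rcases hchain hB0mem hB hne' with h | h
      · exact hWmono _ hB0mem _ hB h
      · have h1 : W B ⊆ W B0 := hWmono _ hB _ hB0mem h
        have h2 : (W B0).ncard ≤ (W B).ncard := by
          rw [hB0card]
          exact Nat.sInf_le ⟨B, hB, rfl⟩
        exact (Set.eq_of_subset_of_ncard_le h1 h2 (hWfin B0)).symm.subset
    obtain ⟨n, hn⟩ := hWne B0 hB0mem
    have hnall : ∀ B ∈ 𝒞, c ≤ Metric.diam (T n '' B) := fun B hB => (hB0min B hB hn).2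
    -- compactness argument: pass the diameter bound to the intersection
    set F : Set X → Set (X × X) :=
      fun B => ((T n '' B) ×ˢ (T n '' B)) ∩ {z : X × X | c ≤ dist z.1 z.2} with hF_def
    have hFclosedset : IsClosed {z : X × X | c ≤ dist z.1 z.2} :=
      isClosed_le continuous_const continuous_dist
    have hFcomp : ∀ B ∈ 𝒞, IsCompact (F B) := by
      intro B hB
      exact ((himgc n B (h𝒞S hB).2.1).prod (himgc n B (h𝒞S hB).2.1)).inter_right hFclosedset
    have hFne : ∀ B ∈ 𝒞, (F B).Nonempty := by
      intro B hB
      have hs : IsCompact (T n '' B) := himgc n B (h𝒞S hB).2.1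
      have hsne : (T n '' B).Nonempty := ((h𝒞S hB).2.2.1.nonempty).image _
      obtain ⟨z, hz, hmax⟩ := (hs.prod hs).exists_isMaxOn (hsne.prod hsne)
        (continuous_dist.continuousOn)
      have hdiam : Metric.diam (T n '' B) ≤ dist z.1 z.2 := by
        apply Metric.diam_le_of_forall_dist_le dist_nonneg
        intro x hx y hy
        exact hmax (Set.mk_mem_prod hx hy)
      exact ⟨z, hz, le_trans (hnall B hB) hdiam⟩
    have hFmono : ∀ B₁ B₂ : Set X, B₁ ⊆ B₂ → F B₁ ⊆ F B₂ := by
      intro B₁ B₂ hsub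
      exact Set.inter_subset_inter_left _
        (Set.prod_mono (Set.image_mono hsub) (Set.image_mono hsub))
    have hdir : Directed (· ⊇ ·) (fun B : ↥𝒞 => F B.1) := by
      rintro B B'
      rcases eq_or_ne B.1 B'.1 with heq | hne'
      · exact ⟨B, subset_rfl, (congrArg F heq).subset⟩
      rcases hchain B.2 B'.2 hne' with h | h
      · exact ⟨B, subset_rfl, hFmono _ _ h⟩
      · exact ⟨B', hFmono _ _ h, subset_rfl⟩
    obtain ⟨z, hz⟩ := IsCompact.nonempty_iInter_of_directed_nonempty_isCompact_isClosed
      _ hdir (fun B => hFne B.1 B.2) (fun B => hFcomp B.1 B.2)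
      (fun B => (hFcomp B.1 B.2).isClosed)
    have hzF : ∀ B ∈ 𝒞, z ∈ F B := fun B hB => Set.mem_iInter.mp hz ⟨B, hB⟩
    have hz1 : z.1 ∈ T n '' ⋂₀ 𝒞 := by
      refine ⟨T (-n) z.1, ?_, hTinv' n z.1⟩
      intro B hB
      obtain ⟨b, hb, hbe⟩ := (hzF B hB).1.1
      rw [← hbe, hTinv]
      exact hb
    have hz2 : z.2 ∈ T n '' ⋂₀ 𝒞 := by
      refine ⟨T (-n) z.2, ?_, hTinv' n z.2⟩
      intro B hB
      obtain ⟨b, hb, hbe⟩ := (hzF B hB).1.2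
      rw [← hbe, hTinv]
      exact hb
    have hcd : c ≤ dist z.1 z.2 := (hzF Bw hBw).2
    have hfinal : c ≤ Metric.diam (T n '' ⋂₀ 𝒞) :=
      le_trans hcd (Metric.dist_le_diam_of_mem (hbded n _ hIcomp) hz1 hz2)
    exact ⟨⋂₀ 𝒞, ⟨(hIsub Bw hBw).trans (h𝒞S hBw).1, hIcomp, hIconn, n, hn.1, hfinal⟩, hIsub⟩
  obtain ⟨B, hBA, hBminimal⟩ := zorn_superset_nonempty S hZorn A hAS
  have hBS : B ∈ S := hBminimal.1
  obtain ⟨hBsubA, hBcomp, hBconn, nw, hnwcube, hnwdiam⟩ := hBS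
  -- minimality forces all cube iterates of B to have diameter ≤ 2c
  have hle2c : ∀ n ∈ cubeZ k N, Metric.diam (T n '' B) ≤ 2 * c := by
    intro n0 hn0
    by_contra hgt
    push_neg at hgt
    set K : Set X := T n0 '' B with hK_def
    have hKcomp : IsCompact K := himgc n0 B hBcomp
    have hKconn : IsConnected K := hBconn.image _ (hT.cont n0).continuousOn
    obtain ⟨p, hp, q, hq, hpq⟩ : ∃ p ∈ K, ∃ q ∈ K, 2 * c < dist p q := by
      by_contra hcon2
      push_neg at hcon2
      exact absurd (Metric.diam_le_of_forall_dist_le (by linarith) hcon2) (not_le.mpr hgt)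
    obtain ⟨C, hCsubK, hCcomp, hCconn, hpC, hCball, x, hxC, hxd⟩ :=
      aux_subcontinuum hKcomp hKconn hp hq hc.le (by linarith)
    set B' : Set X := T (-n0) '' C with hB'_def
    have hB'subB : B' ⊆ B := by
      intro y hy
      obtain ⟨cpt, hcpt, rfl⟩ := hy
      obtain ⟨b, hb, hbe⟩ := hCsubK hcpt
      rw [← hbe, hTinv]
      exact hb
    have hB'comp : IsCompact B' := himgc _ C hCcomp
    have hB'conn : IsConnected B' := hCconn.image _ (hT.cont _).continuousOn
    have hB'img : T n0 '' B' = C := himg n0 C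
    have hB'diam : c ≤ Metric.diam (T n0 '' B') := by
      rw [hB'img]
      exact le_trans hxd (Metric.dist_le_diam_of_mem hCcomp.isBounded hpC hxC)
    have hB'S : B' ∈ S := ⟨hB'subB.trans hBsubA, hB'comp, hB'conn, n0, hn0, hB'diam⟩
    have hBB' : B ⊆ B' := hBminimal.2 hB'S hB'subB
    have hKC : K ⊆ C := by
      rw [← hB'img]
      exact Set.image_mono hBB'
    have hKdiam : Metric.diam K ≤ 2 * c := by
      apply Metric.diam_le_of_forall_dist_le (by linarith)
      intro a ha b hb
      have ha' := hCball (hKC ha)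
      have hb' := hCball (hKC hb)
      rw [Metric.mem_closedBall] at ha' hb'
      calc dist a b ≤ dist a p + dist p b := dist_triangle a p b
        _ ≤ c + c := add_le_add ha' (by rw [dist_comm]; exact hb')
        _ = 2 * c := by ring
    linarith
  -- apply the δ-property to B and contradict the boundary bound
  obtain ⟨m, hmbound, hmdiam⟩ := hδprop B
    (hBminimal.1.2.1) (hBminimal.1.2.2.1) N hN ⟨nw, hnwcube, hnwdiam⟩ hle2c
  have h1 : Metric.diam (T m '' B) ≤ Metric.diam (T m '' A) :=
    Metric.diam_mono (Set.image_mono hBsubA) (hbded m A hAcomp)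
  have h2 := hbound m hmbound
  linarith
end

section
/- Let (X,d) be a compact metric space, ε > 0, and let U be a finite open cover of X with mesh(U,d) < ε. Then Widim_ε(X,d) ≤ D(U). Consequently, if a compact metric space P and a continuous map f: X → P are such that f is U-compatible (there is a finite open cover β of P with f^{-1}(β) refining U), then f is an ε-embedding. -/
open Set Filter Metric MeasureTheory
open scoped ENNReal NNReal

namespace Stmt15
open Classical

/-- palette sets -/
def Qpal (c : ℕ) : Set ℝ := {x | x ∈ Set.Ioo (0:ℝ) 1 ∧ ∃ q : ℚ, x = c * Real.sqrt 2 + q}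

lemma Qpal_eq {c c' : ℕ} {x : ℝ} (hx : x ∈ Qpal c) (hx' : x ∈ Qpal c') : c = c' := by
  by_contra hne
  obtain ⟨-, q, hq⟩ := hx
  obtain ⟨-, q', hq'⟩ := hx'
  have hcc : ((c:ℚ) : ℝ) - ((c':ℚ):ℝ) ≠ 0 := by
    push_cast
    rw [sub_ne_zero]
    exact_mod_cast hne
  apply irrational_sqrt_two
  refine ⟨(q - q')/((c':ℚ) - c), ?_⟩
  have h1 : (c:ℝ) * Real.sqrt 2 + q = (c':ℝ) * Real.sqrt 2 + q' := hq ▸ hq'.symm ▸ rfl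
  push_cast
  rw [div_eq_iff (by push_cast at hcc ⊢; intro h; apply hcc; linarith)]
  push_cast at h1
  linarith

lemma exists_palette {ι : Type} [Fintype ι] (n : ℕ) (p : ι → ℝ)
    (hpos : ∀ i, 0 ≤ p i) (hsum : ∑ i, p i = 1)
    (hcard : (Finset.univ.filter (fun i => p i ≠ 0)).card ≤ n + 1) :
    ∃ c : Fin (n + 1), ∀ i, p i ∉ Qpal c := by
  by_contra hcon
  push_neg at hcon
  choose g hg using hcon
  have hginj : Function.Injective g := by
    intro c c' h
    have : p (g c) ∈ Qpal c' := h ▸ hg c'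
    exact Fin.ext (Qpal_eq (hg c) this)
  have hsub : Finset.univ.image g ⊆ Finset.univ.filter (fun i => p i ≠ 0) := by
    intro i hi
    simp only [Finset.mem_image] at hi
    obtain ⟨c, -, rfl⟩ := hi
    simp only [Finset.mem_filter, Finset.mem_univ, true_and]
    exact ne_of_gt (hg c).1.1
  have hcardim : (Finset.univ.image g).card = n + 1 := by
    rw [Finset.card_image_of_injective _ hginj, Finset.card_univ, Fintype.card_fin]
  have heq : Finset.univ.image g = Finset.univ.filter (fun i => p i ≠ 0) := by
    apply Finset.eq_of_subset_of_card_le hsub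
    rw [hcardim]; exact hcard
  have hsum2 : ∑ c : Fin (n+1), p (g c) = 1 := by
    rw [← Finset.sum_image (fun x _ y _ h => hginj h), heq, Finset.sum_filter_ne_zero, hsum]
  choose q hq using fun c => (hg c).2
  rcases Nat.eq_zero_or_pos n with hn | hn
  · subst hn
    rw [Fin.sum_univ_one] at hsum2
    exact absurd hsum2 (ne_of_lt (hg 0).1.2)
  · -- n ≥ 1 : sum gives sqrt 2 rational
    have hsum3 : (∑ c : Fin (n+1), ((c:ℕ):ℝ)) * Real.sqrt 2 + ((∑ c : Fin (n+1), q c : ℚ) : ℝ) = 1 := by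
      rw [← hsum2]
      push_cast
      rw [Finset.sum_mul, ← Finset.sum_add_distrib]
      exact Finset.sum_congr rfl fun c _ => by rw [hq c]
    set m : ℕ := ∑ c : Fin (n+1), (c:ℕ) with hm
    have hmpos : 0 < m := by
      rw [hm]
      have : (1:ℕ) ≤ ((⟨1, by omega⟩ : Fin (n+1)):ℕ) := le_refl _
      calc (0:ℕ) < 1 := one_pos
        _ ≤ _ := Finset.single_le_sum (f := fun c : Fin (n+1) => (c:ℕ)) (fun _ _ => Nat.zero_le _) (Finset.mem_univ ⟨1, by omega⟩)
    apply irrational_sqrt_two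
    refine ⟨(1 - ∑ c : Fin (n+1), q c) / m, ?_⟩
    have hmr : ((m:ℚ):ℝ) ≠ 0 := by
      push_cast; exact_mod_cast Nat.cast_ne_zero.mpr hmpos.ne'
    rw [Rat.cast_div]
    rw [div_eq_iff hmr]
    have : (∑ c : Fin (n+1), ((c:ℕ):ℝ)) = ((m:ℚ):ℝ) := by push_cast [hm]; norm_num
    push_cast at this hsum3 ⊢
    rw [this] at hsum3
    linarith [hsum3, mul_comm ((m:ℕ):ℝ) (Real.sqrt 2)]


lemma find_interval {M : ℕ} (b : ℕ → ℝ) (x : ℝ) (h0 : b 0 < x) (hM : x < b (M+2))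
    (hne : ∀ j, x ≠ b j) : ∃ k, k ≤ M + 1 ∧ b k < x ∧ x < b (k+1) := by
  classical
  set s := (Finset.range (M+2)).filter (fun j => b j < x) with hs
  have hs0 : 0 ∈ s := by simp [hs, h0]
  obtain ⟨k, hk, hmax⟩ := Finset.exists_max_image s id ⟨0, hs0⟩
  simp only [hs, Finset.mem_filter, Finset.mem_range] at hk
  refine ⟨k, by omega, hk.2, ?_⟩
  rcases eq_or_lt_of_le (Nat.succ_le_of_lt hk.1) with he | hlt
  · have h2 : k + 1 = M + 2 := he
    rw [h2]; exact hM
  · by_contra hcon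
    push_neg at hcon
    have hks : k + 1 ∈ s := by
      simp only [hs, Finset.mem_filter, Finset.mem_range]
      exact ⟨hlt, lt_of_le_of_ne hcon (Ne.symm (hne (k+1)))⟩
    have := hmax _ hks
    simp only [id] at this
    omega

lemma dist_le_meshBy {X : Type} [MetricSpace X] [CompactSpace X] (𝒰 : Set (Set X))
    {U : Set X} (hU : U ∈ 𝒰) {x y : X} (hx : x ∈ U) (hy : y ∈ U) :
    dist x y ≤ meshBy dist 𝒰 := by
  obtain ⟨C, hC⟩ := Metric.isBounded_iff.mp (isCompact_univ (X := X)).isBounded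
  have hC' : ∀ a b : X, dist a b ≤ max C 0 :=
    fun a b => le_trans (hC (mem_univ a) (mem_univ b)) (le_max_left _ _)
  have hC0 : (0:ℝ) ≤ max C 0 := le_max_right _ _
  have hdiam_le : ∀ s : Set X, diamBy dist s ≤ max C 0 := by
    intro s
    exact Real.iSup_le (fun a => Real.iSup_le (fun _ => Real.iSup_le (fun b =>
      Real.iSup_le (fun _ => hC' a b) hC0) hC0) hC0) hC0
  have hinner : ∀ a : X, (⨆ _ : a ∈ U, ⨆ b, ⨆ _ : b ∈ U, dist a b) ≤ max C 0 :=
    fun a => Real.iSup_le (fun _ => Real.iSup_le (fun b =>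
      Real.iSup_le (fun _ => hC' a b) hC0) hC0) hC0
  have step1 : dist x y ≤ diamBy dist U := by
    have e1 : (⨆ _ : y ∈ U, dist x y) = dist x y := by
      haveI : Nonempty (y ∈ U) := ⟨hy⟩; exact ciSup_const
    have e2 : (⨆ _ : x ∈ U, ⨆ b, ⨆ _ : b ∈ U, dist x b) = ⨆ b, ⨆ _ : b ∈ U, dist x b := by
      haveI : Nonempty (x ∈ U) := ⟨hx⟩; exact ciSup_const
    calc dist x y = ⨆ _ : y ∈ U, dist x y := e1.symm
      _ ≤ ⨆ b, ⨆ _ : b ∈ U, dist x b :=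
          le_ciSup (f := fun b => ⨆ _ : b ∈ U, dist x b)
            ⟨max C 0, by rintro _ ⟨b, rfl⟩; exact Real.iSup_le (fun _ => hC' x b) hC0⟩ y
      _ = ⨆ _ : x ∈ U, ⨆ b, ⨆ _ : b ∈ U, dist x b := e2.symm
      _ ≤ diamBy dist U :=
          le_ciSup (f := fun a => ⨆ _ : a ∈ U, ⨆ b, ⨆ _ : b ∈ U, dist a b)
            ⟨max C 0, by rintro _ ⟨a, rfl⟩; exact hinner a⟩ x
  have step2 : diamBy dist U ≤ meshBy dist 𝒰 := by
    have e3 : (⨆ _ : U ∈ 𝒰, diamBy dist U) = diamBy dist U := by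
      haveI : Nonempty (U ∈ 𝒰) := ⟨hU⟩; exact ciSup_const
    calc diamBy dist U = ⨆ _ : U ∈ 𝒰, diamBy dist U := e3.symm
      _ ≤ meshBy dist 𝒰 :=
          le_ciSup (f := fun W => ⨆ _ : W ∈ 𝒰, diamBy dist W)
            ⟨max C 0, by rintro _ ⟨W, rfl⟩; exact Real.iSup_le (fun _ => hdiam_le W) hC0⟩ U
  exact step1.trans step2


set_option maxHeartbeats 1000000 in
lemma covDim_le_palette {ι : Type} [Fintype ι] (n : ℕ) (K : Set (ι → ℝ))
    (hKc : IsCompact K)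
    (hbd : ∀ p ∈ K, ∀ i, p i ∈ Set.Icc (0:ℝ) 1)
    (hpal : ∀ p ∈ K, ∃ c : Fin (n+1), ∀ i, p i ∉ Qpal c) :
    covDim ↥K ≤ (n : ℕ∞) := by
  haveI : CompactSpace ↥K := isCompact_iff_compactSpace.mp hKc
  rw [covDim]
  refine iSup_le fun 𝒲 => iSup_le fun h𝒲 => ?_
  rw [Nat.cast_le]
  -- Lebesgue number
  obtain ⟨δ, hδ, hleb⟩ := lebesgue_number_lemma_of_metric (isCompact_univ (X := ↥K))
      (fun W : ↥𝒲 => h𝒲.2.1 W W.2)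
      (by rw [← Set.sUnion_eq_iUnion, h𝒲.2.2])
  obtain ⟨M, hM⟩ := exists_nat_gt (2/δ)
  set h : ℝ := 1/(M+1) with hh
  have hhpos : 0 < h := by positivity
  have hMh : ((M:ℝ)+1) * h = 1 := by rw [hh]; field_simp
  have h2h : 2 * h < δ := by
    rw [div_lt_iff₀ hδ] at hM
    have hM1 : (0:ℝ) < (M:ℝ) + 1 := by positivity
    rw [hh, show 2 * (1/((M:ℝ)+1)) = 2/((M:ℝ)+1) by ring, div_lt_iff₀ hM1]
    nlinarith
  -- choose cut points in each palette
  have hcut : ∀ (c : Fin (n+1)) (j : ℕ), ∃ x : ℝ, j ≤ M →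
      x ∈ Qpal c ∧ (j:ℝ) * h < x ∧ x < ((j:ℝ)+1) * h := by
    intro c j
    by_cases hj : j ≤ M
    · have hlt : (j:ℝ) * h - c * Real.sqrt 2 < ((j:ℝ)+1) * h - c * Real.sqrt 2 := by
        nlinarith [hhpos]
      obtain ⟨q, hq1, hq2⟩ := exists_rat_btwn hlt
      have hx1 : (j:ℝ) * h < c * Real.sqrt 2 + q := by linarith
      have hx2 : ((c:ℝ)) * Real.sqrt 2 + q < ((j:ℝ)+1) * h := by linarith
      refine ⟨c * Real.sqrt 2 + q, fun _ => ⟨⟨⟨?_, ?_⟩, q, rfl⟩, hx1, hx2⟩⟩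
      · have : (0:ℝ) ≤ (j:ℝ) * h := by positivity
        linarith
      · have : ((j:ℝ)+1) * h ≤ ((M:ℝ)+1) * h := by
          have : (j:ℝ) + 1 ≤ (M:ℝ) + 1 := by exact_mod_cast Nat.succ_le_succ hj
          nlinarith [hhpos]
        linarith [hMh]
    · exact ⟨0, fun hc => absurd hc hj⟩
  choose A hA using hcut
  -- the cut sequence with sentinels
  set b : Fin (n+1) → ℕ → ℝ := fun c j => if j = 0 then -1 else if j ≤ M + 1 then A c (j-1) else 2
    with hbdef
  have hb0 : ∀ c, b c 0 = -1 := fun c => by simp [hbdef]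
  have hbs : ∀ c (j : ℕ), j ≤ M → b c (j+1) = A c j := by
    intro c j hj
    simp only [hbdef, Nat.succ_ne_zero, if_false, Nat.add_sub_cancel]
    rw [if_pos (by omega : j + 1 ≤ M + 1)]
  have hbtop : ∀ c (j : ℕ), M + 1 < j → b c j = 2 := by
    intro c j hj
    simp only [hbdef]
    rw [if_neg (by omega), if_neg (by omega)]
  have hAQ : ∀ (c : Fin (n+1)) (j : ℕ), j ≤ M → A c j ∈ Qpal (c : ℕ) :=
    fun c j hj => (hA c j hj).1
  have hAlb : ∀ c (j : ℕ), j ≤ M → (j:ℝ) * h < A c j := fun c j hj => (hA c j hj).2.1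
  have hAub : ∀ c (j : ℕ), j ≤ M → A c j < ((j:ℝ)+1) * h := fun c j hj => (hA c j hj).2.2
  have hApos : ∀ c (j : ℕ), j ≤ M → 0 < A c j := fun c j hj => (hAQ c j hj).1.1
  have hAlt1 : ∀ c (j : ℕ), j ≤ M → A c j < 1 := fun c j hj => (hAQ c j hj).1.2
  have hbmono : ∀ c, Monotone (b c) := by
    intro c
    apply monotone_nat_of_le_succ
    intro j
    rcases Nat.eq_zero_or_pos j with rfl | hj
    · rw [hb0, hbs c 0 (Nat.zero_le M)]
      linarith [hApos c 0 (Nat.zero_le M)]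
    · obtain ⟨i, rfl⟩ := Nat.exists_eq_succ_of_ne_zero (Nat.pos_iff_ne_zero.mp hj)
      by_cases hi1 : i + 1 ≤ M
      · rw [hbs c i (by omega), hbs c (i+1) hi1]
        have h1 := hAub c i (by omega)
        have h2 := hAlb c (i+1) hi1
        push_cast at h1 h2
        linarith
      · rw [hbtop c (i+2) (by omega)]
        by_cases hi2 : i ≤ M
        · rw [hbs c i hi2]; linarith [hAlt1 c i hi2]
        · rw [hbtop c (i+1) (by omega)]
  -- cells
  set cell : Fin (n+1) → (ι → Fin (M+2)) → Set ↥K :=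
    fun c σ => {y | ∀ i, (y : ι → ℝ) i ∈ Set.Ioo (b c (σ i)) (b c ((σ i : ℕ)+1))} with hcelldef
  set 𝒱 : Set (Set ↥K) := {W | W.Nonempty ∧ ∃ c σ, W = cell c σ} with h𝒱def
  -- basic facts
  have hfin : 𝒱.Finite := by
    apply Set.Finite.subset
      (Set.finite_range (fun p : Fin (n+1) × (ι → Fin (M+2)) => cell p.1 p.2))
    rintro W ⟨-, c, σ, rfl⟩
    exact ⟨(c, σ), rfl⟩
  have hopen : ∀ W ∈ 𝒱, IsOpen W := by
    rintro W ⟨-, c, σ, rfl⟩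
    have : cell c σ = ⋂ i, (fun y : ↥K => (y : ι → ℝ) i) ⁻¹'
        Set.Ioo (b c (σ i)) (b c ((σ i : ℕ)+1)) := by
      ext y; simp [hcelldef, Set.mem_iInter]
    rw [this]
    exact isOpen_iInter_of_finite fun i =>
      isOpen_Ioo.preimage ((continuous_apply i).comp continuous_subtype_val)
  -- membership of a point in a unique cell per palette
  have hdisj : ∀ (c : Fin (n+1)) (σ σ' : ι → Fin (M+2)) (y : ↥K),
      y ∈ cell c σ → y ∈ cell c σ' → σ = σ' := by
    intro c σ σ' y hy hy'
    funext i
    have h1 := hy i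
    have h2 := hy' i
    have key : ∀ k l : Fin (M+2), (k:ℕ) < (l:ℕ) →
        (y : ι → ℝ) i ∈ Set.Ioo (b c k) (b c ((k:ℕ)+1)) →
        (y : ι → ℝ) i ∈ Set.Ioo (b c l) (b c ((l:ℕ)+1)) → False := by
      intro k l hkl hk hl
      have : b c ((k:ℕ)+1) ≤ b c (l:ℕ) := hbmono c (by omega)
      have := hk.2.trans_le this
      linarith [hl.1]
    rcases lt_trichotomy ((σ i : ℕ)) ((σ' i : ℕ)) with hlt | heq | hgt
    · exact (key _ _ hlt h1 h2).elim
    · exact Fin.ext heq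
    · exact (key _ _ hgt h2 h1).elim
  -- cover
  have hcover : ⋃₀ 𝒱 = Set.univ := by
    apply Set.eq_univ_of_forall
    intro y
    obtain ⟨c, hc⟩ := hpal (y : ι → ℝ) y.2
    have hicc := hbd (y : ι → ℝ) y.2
    have hfind : ∀ i, ∃ k, k ≤ M + 1 ∧ b c k < (y : ι → ℝ) i ∧ (y : ι → ℝ) i < b c (k+1) := by
      intro i
      apply find_interval
      · rw [hb0]; linarith [(hicc i).1]
      · rw [hbtop c (M+2) (by omega)]; linarith [(hicc i).2]
      · intro j
        rcases Nat.eq_zero_or_pos j with rfl | hj0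
        · rw [hb0]; intro hcon; linarith [(hicc i).1]
        · by_cases hj : j ≤ M + 1
          · obtain ⟨j', rfl⟩ := Nat.exists_eq_succ_of_ne_zero (Nat.pos_iff_ne_zero.mp hj0)
            rw [hbs c j' (by omega)]
            intro hcon
            exact hc i (hcon ▸ hAQ c j' (by omega))
          · rw [hbtop c j (by omega)]; intro hcon; linarith [(hicc i).2]
    choose k hk1 hk2 hk3 using hfind
    refine ⟨cell c (fun i => ⟨k i, by have := hk1 i; omega⟩), ⟨⟨y, ?_⟩, c, _, rfl⟩, ?_⟩
    · intro i; exact ⟨hk2 i, hk3 i⟩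
    · intro i; exact ⟨hk2 i, hk3 i⟩
  -- small diameter
  have hsmall : ∀ (c : Fin (n+1)) (σ : ι → Fin (M+2)) (y z : ↥K),
      y ∈ cell c σ → z ∈ cell c σ → dist y z < δ := by
    intro c σ y z hy hz
    have key : ∀ i, dist ((y : ι → ℝ) i) ((z : ι → ℝ) i) ≤ 2 * h := by
      intro i
      have hyi := hy i
      have hzi := hz i
      have hyb := hbd (y : ι → ℝ) y.2 i
      have hzb := hbd (z : ι → ℝ) z.2 i
      rw [Real.dist_eq, abs_le]
      obtain ⟨k, hk⟩ : ∃ k, ((σ i : ℕ)) = k := ⟨_, rfl⟩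
      rw [hk] at hyi hzi
      have hkM : k ≤ M + 1 := by have := (σ i).2; omega
      rcases Nat.eq_zero_or_pos k with hk0 | hkpos
      · -- k = 0 : both in [0, b c 1), b c 1 = A c 0 < h
        rw [hk0] at hyi hzi
        rw [hbs c 0 (Nat.zero_le M)] at hyi hzi
        have := hAub c 0 (Nat.zero_le M)
        push_cast at this
        constructor <;> nlinarith [hyi.2, hzi.2, hyb.1, hzb.1, hhpos]
      · rcases Nat.lt_or_ge k (M+1) with hkM1 | hkM1
        · -- 1 ≤ k ≤ M : both in (A c (k-1), A c k)
          obtain ⟨m, rfl⟩ := Nat.exists_eq_succ_of_ne_zero (Nat.pos_iff_ne_zero.mp hkpos)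
          rw [hbs c m (by omega), hbs c (m+1) (by omega)] at hyi hzi
          have h1 := hAlb c m (by omega)
          have h2 := hAub c (m+1) (by omega)
          push_cast at h1 h2
          constructor <;> nlinarith [hyi.1, hyi.2, hzi.1, hzi.2]
        · -- k = M+1 : both in (A c M, 1]
          have hkeq : k = M + 1 := by omega
          rw [hkeq] at hyi hzi
          rw [hbs c M (le_refl M)] at hyi hzi
          have h1 := hAlb c M (le_refl M)
          push_cast at h1
          constructor <;> nlinarith [hyi.1, hzi.1, hyb.2, hzb.2, hMh]
    have : dist y z ≤ 2 * h := by
      rw [Subtype.dist_eq]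
      exact (dist_pi_le_iff (by positivity)).mpr key
    linarith
  -- refinement
  have hrefine : ∀ V ∈ 𝒱, ∃ U ∈ 𝒲, V ⊆ U := by
    rintro V ⟨⟨z, hz⟩, c, σ, rfl⟩
    obtain ⟨W, hW⟩ := hleb z (Set.mem_univ z)
    exact ⟨(W : Set ↥K), W.2, fun y hy => hW (mem_ball.mpr (hsmall c σ y z hy hz))⟩
  -- order
  have hord : ordCover ↥K 𝒱 ≤ n := by
    apply ciSup_le'
    intro y
    have hcard : {W | W ∈ 𝒱 ∧ y ∈ W}.ncard ≤ n + 1 := by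
      have hfin2 : {W | W ∈ 𝒱 ∧ y ∈ W}.Finite := hfin.subset (fun W hW => hW.1)
      set F : Set ↥K → Fin (n+1) := fun W =>
        if hw : ∃ c σ, W = cell c σ ∧ y ∈ W then hw.choose else 0 with hFdef
      have hinj : Set.InjOn F {W | W ∈ 𝒱 ∧ y ∈ W} := by
        intro W hW W' hW' hFF
        have hw : ∃ c σ, W = cell c σ ∧ y ∈ W := by
          obtain ⟨⟨-, c, σ, rfl⟩, hyW⟩ := hW
          exact ⟨c, σ, rfl, hyW⟩
        have hw' : ∃ c σ, W' = cell c σ ∧ y ∈ W' := by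
          obtain ⟨⟨-, c, σ, rfl⟩, hyW⟩ := hW'
          exact ⟨c, σ, rfl, hyW⟩
        rw [hFdef] at hFF
        simp only [dif_pos hw, dif_pos hw'] at hFF
        obtain ⟨σ, hWeq, hyW⟩ := hw.choose_spec
        obtain ⟨σ', hWeq', hyW'⟩ := hw'.choose_spec
        rw [hWeq, hWeq']
        rw [hWeq] at hyW; rw [hWeq'] at hyW'
        rw [hFF] at hyW
        rw [hdisj _ _ _ y hyW hyW', hFF]
      calc {W | W ∈ 𝒱 ∧ y ∈ W}.ncard
          ≤ (Set.univ : Set (Fin (n+1))).ncard := by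
            apply Set.ncard_le_ncard_of_injOn F (fun W _ => Set.mem_univ _) hinj
        _ = n + 1 := by simp [Set.ncard_univ]
    omega
  -- conclude
  have hmem : ordCover ↥K 𝒱 ∈ {m : ℕ | ∃ 𝒱' : Set (Set ↥K),
      IsFinOpenCover ↥K 𝒱' ∧ (∀ V ∈ 𝒱', ∃ U ∈ 𝒲, V ⊆ U) ∧ ordCover ↥K 𝒱' = m} :=
    ⟨𝒱, ⟨hfin, hopen, hcover⟩, hrefine, rfl⟩
  exact le_trans (Nat.sInf_le hmem) hord


end Stmt15

/-- If `𝒰` is a finite open cover of mesh `< ε`, then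
`Widim_ε(X,d) ≤ D(𝒰)`; consequently, any continuous `𝒰`-compatible map to a compact
metric space is an `ε`-embedding. -/
theorem widim_le_degCover_of_mesh_lt
    (X : Type) [MetricSpace X] [CompactSpace X] (ε : ℝ) (hε : 0 < ε)
    (𝒰 : Set (Set X)) (h𝒰 : IsFinOpenCover X 𝒰) (hmesh : meshBy dist 𝒰 < ε) :
    widim X dist ε ≤ (degCover X 𝒰 : ℕ∞) ∧
    ∀ (P : Type) (_ : MetricSpace P) (_ : CompactSpace P) (f : X → P), Continuous f →
      (∃ β : Set (Set P), IsFinOpenCover P β ∧ ∀ B ∈ β, ∃ U ∈ 𝒰, f ⁻¹' B ⊆ U) →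
      ∀ x y : X, f x = f y → dist x y < ε := by
  classical
  have hdistlt : ∀ U ∈ 𝒰, ∀ x y : X, x ∈ U → y ∈ U → dist x y < ε :=
    fun U hU x y hx hy => lt_of_le_of_lt (Stmt15.dist_le_meshBy 𝒰 hU hx hy) hmesh
  constructor
  · -- main part
    set D := {m : ℕ | ∃ 𝒱 : Set (Set X),
      IsFinOpenCover X 𝒱 ∧ (∀ V ∈ 𝒱, ∃ U ∈ 𝒰, V ⊆ U) ∧ ordCover X 𝒱 = m} with hD
    have hDne : D.Nonempty := ⟨ordCover X 𝒰, 𝒰, h𝒰, fun V hV => ⟨V, hV, subset_rfl⟩, rfl⟩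
    have hmem : degCover X 𝒰 ∈ D := Nat.sInf_mem hDne
    obtain ⟨𝒱, h𝒱, href, hord⟩ := hmem
    set n := degCover X 𝒰 with hn
    haveI : Fintype ↥𝒱 := h𝒱.1.fintype
    -- partition of unity
    set ψ : ↥𝒱 → X → ℝ := fun V x =>
      if (V : Set X)ᶜ = ∅ then 1 else Metric.infDist x (V : Set X)ᶜ with hψdef
    have hψcont : ∀ V, Continuous (ψ V) := by
      intro V
      by_cases hc : (V : Set X)ᶜ = ∅
      · simp only [hψdef, if_pos hc]; exact continuous_const
      · simp only [hψdef, if_neg hc]; exact Metric.continuous_infDist_pt _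
    have hψnn : ∀ V x, 0 ≤ ψ V x := by
      intro V x
      by_cases hc : (V : Set X)ᶜ = ∅
      · simp only [hψdef, if_pos hc]; norm_num
      · simp only [hψdef, if_neg hc]; exact Metric.infDist_nonneg
    have hψpos : ∀ (V : ↥𝒱) (x : X), x ∈ (V : Set X) → 0 < ψ V x := by
      intro V x hx
      by_cases hc : (V : Set X)ᶜ = ∅
      · simp only [hψdef, if_pos hc]; norm_num
      · simp only [hψdef, if_neg hc]
        refine (IsClosed.notMem_iff_infDist_pos ?_ (Set.nonempty_iff_ne_empty.mpr hc)).mp ?_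
        · exact (h𝒱.2.1 V V.2).isClosed_compl
        · simpa using hx
    have hψsupp : ∀ (V : ↥𝒱) (x : X), ψ V x ≠ 0 → x ∈ (V : Set X) := by
      intro V x hne
      by_contra hx
      apply hne
      have hc : (V : Set X)ᶜ ≠ ∅ := Set.nonempty_iff_ne_empty.mp ⟨x, hx⟩
      simp only [hψdef, if_neg hc]
      exact Metric.infDist_zero_of_mem hx
    set S : X → ℝ := fun x => ∑ V : ↥𝒱, ψ V x with hSdef
    have hScont : Continuous S := by
      apply continuous_finset_sum; exact fun V _ => hψcont V
    have hSpos : ∀ x, 0 < S x := by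
      intro x
      have hx : x ∈ ⋃₀ 𝒱 := by rw [h𝒱.2.2]; trivial
      obtain ⟨V, hV, hxV⟩ := hx
      exact Finset.sum_pos' (fun i _ => hψnn i x)
        ⟨⟨V, hV⟩, Finset.mem_univ _, hψpos ⟨V, hV⟩ x hxV⟩
    set f : X → (↥𝒱 → ℝ) := fun x V => ψ V x / S x with hfdef
    have hfcont : Continuous f :=
      continuous_pi fun V => (hψcont V).div hScont (fun x => (hSpos x).ne')
    have hfnn : ∀ x V, 0 ≤ f x V := fun x V => div_nonneg (hψnn V x) (hSpos x).le
    have hfsum : ∀ x, ∑ V : ↥𝒱, f x V = 1 := by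
      intro x
      simp only [hfdef]
      rw [← Finset.sum_div]
      exact div_self (hSpos x).ne'
    have hfle1 : ∀ x V, f x V ≤ 1 := by
      intro x V
      rw [← hfsum x]
      exact Finset.single_le_sum (fun i _ => hfnn x i) (Finset.mem_univ V)
    have hfsupp : ∀ x V, f x V ≠ 0 → x ∈ (V : Set X) := by
      intro x V hne
      apply hψsupp V x
      intro h0
      apply hne
      simp only [hfdef, h0, zero_div]
    -- support cardinality
    have hcard : ∀ x, (Finset.univ.filter (fun V : ↥𝒱 => f x V ≠ 0)).card ≤ n + 1 := by
      intro x
      have hsubs : (Finset.univ.filter (fun V : ↥𝒱 => f x V ≠ 0)) ⊆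
          (Finset.univ.filter (fun V : ↥𝒱 => x ∈ (V : Set X))) := by
        intro V hV
        simp only [Finset.mem_filter, Finset.mem_univ, true_and] at hV ⊢
        exact hfsupp x V hV
      have himg : {U | U ∈ 𝒱 ∧ x ∈ U} = Subtype.val '' {V : ↥𝒱 | x ∈ (V : Set X)} := by
        ext U
        constructor
        · rintro ⟨hU, hx⟩; exact ⟨⟨U, hU⟩, hx, rfl⟩
        · rintro ⟨⟨V, hV⟩, hx, rfl⟩; exact ⟨hV, hx⟩
      have hset : {V : ↥𝒱 | x ∈ (V : Set X)} =
          (↑(Finset.univ.filter (fun V : ↥𝒱 => x ∈ (V : Set X))) : Set ↥𝒱) := by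
        ext V; simp
      have h2 : {U | U ∈ 𝒱 ∧ x ∈ U}.ncard
          = (Finset.univ.filter (fun V : ↥𝒱 => x ∈ (V : Set X))).card := by
        rw [himg, Set.ncard_image_of_injective _ Subtype.val_injective, hset,
          Set.ncard_coe_finset]
      have h3 : {U | U ∈ 𝒱 ∧ x ∈ U}.ncard - 1 ≤ n := by
        rw [← hord]
        show {U | U ∈ 𝒱 ∧ x ∈ U}.ncard - 1 ≤ ⨆ x : X, ({U | U ∈ 𝒱 ∧ x ∈ U}.ncard - 1)
        refine le_ciSup (f := fun z : X => ({U | U ∈ 𝒱 ∧ z ∈ U}.ncard - 1)) ⟨𝒱.ncard, ?_⟩ x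
        rintro _ ⟨z, rfl⟩
        exact le_trans (Nat.sub_le _ _) (Set.ncard_le_ncard (fun U hU => hU.1) h𝒱.1)
      have h4 := Finset.card_le_card hsubs
      omega
    have hKbd : ∀ p ∈ Set.range f, ∀ V, p V ∈ Set.Icc (0:ℝ) 1 := by
      rintro p ⟨x, rfl⟩ V; exact ⟨hfnn x V, hfle1 x V⟩
    have hKpal : ∀ p ∈ Set.range f, ∃ c : Fin (n+1), ∀ V, p V ∉ Stmt15.Qpal c := by
      rintro p ⟨x, rfl⟩
      exact Stmt15.exists_palette n (f x) (hfnn x) (hfsum x) (hcard x)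
    have hKc : IsCompact (Set.range f) := isCompact_range hfcont
    haveI : CompactSpace ↥(Set.range f) := isCompact_iff_compactSpace.mp hKc
    have hcov : covDim ↥(Set.range f) ≤ (n : ℕ∞) :=
      Stmt15.covDim_le_palette n (Set.range f) hKc hKbd hKpal
    have hemb : ∀ x y : X, f x = f y → dist x y < ε := by
      intro x y hxy
      have hx : x ∈ ⋃₀ 𝒱 := by rw [h𝒱.2.2]; trivial
      obtain ⟨V, hV, hxV⟩ := hx
      have hfx : f x ⟨V, hV⟩ ≠ 0 := ne_of_gt (div_pos (hψpos ⟨V, hV⟩ x hxV) (hSpos x))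
      have hfy : f y ⟨V, hV⟩ ≠ 0 := by rw [← hxy]; exact hfx
      have hyV : y ∈ V := hfsupp y ⟨V, hV⟩ hfy
      obtain ⟨U, hU, hVU⟩ := href V hV
      exact hdistlt U hU x y (hVU hxV) (hVU hyV)
    have hwid : widim X dist ε ≤ covDim ↥(Set.range f) := by
      apply sInf_le
      refine ⟨↥(Set.range f), inferInstance, inferInstance,
        fun x => ⟨f x, Set.mem_range_self x⟩, hfcont.subtype_mk _, ?_, rfl⟩
      intro x y hxy
      exact hemb x y (congrArg Subtype.val hxy)
    exact le_trans hwid hcov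
  · rintro P _ _ g hgcont ⟨β, hβ, hcomp⟩ x y hxy
    have hgx : g x ∈ ⋃₀ β := by rw [hβ.2.2]; trivial
    obtain ⟨B, hB, hgxB⟩ := hgx
    obtain ⟨U, hU, hsub⟩ := hcomp B hB
    have hx : x ∈ U := hsub hgxB
    have hy : y ∈ U := hsub (show y ∈ g ⁻¹' B by
      simp only [Set.mem_preimage]; rw [← hxy]; exact hgxB)
    exact hdistlt U hU x y hx hy
end

section
/- Let (X,d) be a compact metric space and let U be a finite open cover of X with Lebesgue number λ > 0 (i.e., every subset of X of diameter less than λ is contained in some member of U). Then D(U) ≤ Widim_λ(X,d). -/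
open Set Filter Metric MeasureTheory
open scoped ENNReal NNReal

lemma ord_pullback {X K : Type} (f : X → K) (𝒱 : Set (Set K)) (h : 𝒱.Finite) :
    (⨆ x : X, ({S | S ∈ (fun V => f ⁻¹' V) '' 𝒱 ∧ x ∈ S}.ncard - 1)) ≤
      ⨆ y : K, ({V | V ∈ 𝒱 ∧ y ∈ V}.ncard - 1) := by
  have hbdd : BddAbove (Set.range fun y : K => ({V | V ∈ 𝒱 ∧ y ∈ V}.ncard - 1)) := by
    refine ⟨𝒱.ncard, ?_⟩
    rintro _ ⟨y, rfl⟩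
    exact le_trans (Nat.sub_le _ _) (Set.ncard_le_ncard (fun V hV => hV.1) h)
  refine ciSup_le' fun x => ?_
  refine le_trans ?_ (le_ciSup hbdd (f x))
  refine Nat.sub_le_sub_right ?_ 1
  have hsub : {S | S ∈ (fun V => f ⁻¹' V) '' 𝒱 ∧ x ∈ S} ⊆
      (fun V => f ⁻¹' V) '' {V | V ∈ 𝒱 ∧ f x ∈ V} := by
    rintro S ⟨⟨V, hV, rfl⟩, hxS⟩
    exact ⟨V, ⟨hV, hxS⟩, rfl⟩
  have hfin : ((fun V => f ⁻¹' V) '' {V | V ∈ 𝒱 ∧ f x ∈ V}).Finite :=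
    (h.subset fun V hV => hV.1).image _
  exact le_trans (Set.ncard_le_ncard hsub hfin)
    (Set.ncard_image_le (h.subset fun V hV => hV.1))

/-- If `λ > 0` is a Lebesgue number of a finite open cover `𝒰` of a
compact metric space `X`, then `D(𝒰) ≤ Widim_λ(X,d)`. -/
theorem degCover_le_widim_of_lebesgue_number
    (X : Type) [MetricSpace X] [CompactSpace X]
    (𝒰 : Set (Set X)) (h𝒰 : IsFinOpenCover X 𝒰) (lam : ℝ) (hlam : 0 < lam)
    (hleb : ∀ s : Set X, Metric.diam s < lam → ∃ U ∈ 𝒰, s ⊆ U) :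
    (degCover X 𝒰 : ℕ∞) ≤ widim X dist lam := by
  refine le_sInf ?_
  rintro m ⟨K, _, _, f, hfc, hfe, rfl⟩
  by_cases hX : Nonempty X
  case neg =>
    have hE : IsEmpty X := not_nonempty_iff.mp hX
    have h0 : degCover X 𝒰 = 0 := by
      refine Nat.eq_zero_of_le_zero (Nat.sInf_le ?_)
      refine ⟨𝒰, h𝒰, fun V hV => ⟨V, hV, subset_rfl⟩, ?_⟩
      simp [ordCover, ciSup_of_empty]
    simp [h0]
  -- X nonempty
  obtain ⟨p₀, hp₀E, hp₀max⟩ :=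
    ((isClosed_eq (hfc.comp continuous_fst) (hfc.comp continuous_snd)).isCompact).exists_isMaxOn
      ⟨(Classical.arbitrary X, Classical.arbitrary X), rfl⟩
      (continuous_dist.continuousOn)
  set c : ℝ := dist p₀.1 p₀.2 with hc
  have hclam : c < lam := hfe _ _ hp₀E
  set lam' : ℝ := (c + lam) / 2 with hlam'
  have hc0 : 0 ≤ c := dist_nonneg
  have hlam'pos : 0 < lam' := by positivity
  have hclam' : c < lam' := by simp only [hlam']; linarith
  have hlam'lam : lam' < lam := by simp only [hlam']; linarith
  have hδ : ∃ δ > 0, ∀ p : X × X, lam' ≤ dist p.1 p.2 → δ ≤ dist (f p.1) (f p.2) := by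
    by_cases hA : {p : X × X | lam' ≤ dist p.1 p.2}.Nonempty
    · obtain ⟨q, hqA, hqmin⟩ :=
        ((isClosed_le continuous_const continuous_dist).isCompact).exists_isMinOn hA
          (((hfc.comp continuous_fst).dist (hfc.comp continuous_snd)).continuousOn)
      refine ⟨dist (f q.1) (f q.2), ?_, fun p hp => hqmin hp⟩
      rw [gt_iff_lt, dist_pos]
      intro hq
      have h1 : dist q.1 q.2 ≤ c := hp₀max hq
      have h2 : lam' ≤ dist q.1 q.2 := hqA
      linarith
    · exact ⟨1, one_pos, fun p hp => absurd ⟨p, hp⟩ hA⟩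
  obtain ⟨δ, hδpos, hδkey⟩ := hδ
  -- finite subcover of K by δ/3 balls
  obtain ⟨t, ht⟩ := isCompact_univ.elim_finite_subcover (fun y : K => Metric.ball y (δ/3))
    (fun y => Metric.isOpen_ball)
    (fun y _ => Set.mem_iUnion.mpr ⟨y, Metric.mem_ball_self (by positivity)⟩)
  set 𝒲 : Set (Set K) := (fun y => Metric.ball y (δ/3)) '' ↑t with h𝒲def
  have h𝒲 : IsFinOpenCover K 𝒲 := by
    refine ⟨(t.finite_toSet).image _, ?_, ?_⟩
    · rintro W ⟨y, _, rfl⟩; exact Metric.isOpen_ball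
    · apply Set.eq_univ_of_univ_subset
      rw [Set.sUnion_image]
      exact ht
  -- small sets in K pull back to small sets in X
  have hsmall : ∀ W ∈ 𝒲, ∃ U ∈ 𝒰, f ⁻¹' W ⊆ U := by
    rintro _ ⟨y, _, rfl⟩
    have hd : Metric.diam (f ⁻¹' Metric.ball y (δ/3)) ≤ lam' := by
      refine Metric.diam_le_of_forall_dist_le hlam'pos.le fun a ha b hb => ?_
      by_contra hab
      push_neg at hab
      have h1 : δ ≤ dist (f a) (f b) := hδkey (a, b) hab.le
      have h2 : dist (f a) (f b) < 2 * (δ/3) := by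
        calc dist (f a) (f b) ≤ dist (f a) y + dist (f b) y := dist_triangle_right _ _ _
        _ < δ/3 + δ/3 := add_lt_add ha hb
        _ = 2 * (δ/3) := by ring
      linarith
    exact hleb _ (lt_of_le_of_lt hd hlam'lam)
  -- main chain
  have key : degCover X 𝒰 ≤ degCover K 𝒲 := by
    have hne : {m : ℕ | ∃ 𝒱 : Set (Set K),
        IsFinOpenCover K 𝒱 ∧ (∀ V ∈ 𝒱, ∃ W ∈ 𝒲, V ⊆ W) ∧ ordCover K 𝒱 = m}.Nonempty :=
      ⟨ordCover K 𝒲, 𝒲, h𝒲, fun V hV => ⟨V, hV, subset_rfl⟩, rfl⟩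
    obtain ⟨𝒱, h𝒱, h𝒱ref, h𝒱ord⟩ := Nat.sInf_mem hne
    set PB : Set (Set X) := (fun V => f ⁻¹' V) '' 𝒱 with hPBdef
    have hPB : IsFinOpenCover X PB := by
      refine ⟨h𝒱.1.image _, ?_, ?_⟩
      · rintro _ ⟨V, hV, rfl⟩; exact (h𝒱.2.1 V hV).preimage hfc
      · apply Set.eq_univ_of_forall
        intro x
        have hx : f x ∈ ⋃₀ 𝒱 := h𝒱.2.2.symm ▸ Set.mem_univ (f x)
        obtain ⟨V, hV, hxV⟩ := hx
        exact ⟨f ⁻¹' V, ⟨V, hV, rfl⟩, hxV⟩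
    have hPBref : ∀ P ∈ PB, ∃ U ∈ 𝒰, P ⊆ U := by
      rintro _ ⟨V, hV, rfl⟩
      obtain ⟨W, hW, hVW⟩ := h𝒱ref V hV
      obtain ⟨U, hU, hWU⟩ := hsmall W hW
      exact ⟨U, hU, (Set.preimage_mono hVW).trans hWU⟩
    calc degCover X 𝒰 ≤ ordCover X PB := Nat.sInf_le ⟨PB, hPB, hPBref, rfl⟩
    _ ≤ ordCover K 𝒱 := ord_pullback f 𝒱 h𝒱.1
    _ = degCover K 𝒲 := h𝒱ord
  calc (degCover X 𝒰 : ℕ∞) ≤ (degCover K 𝒲 : ℕ∞) := Nat.cast_le.mpr key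
  _ ≤ covDim K := le_iSup₂ (f := fun 𝒲 (_ : IsFinOpenCover K 𝒲) => (degCover K 𝒲 : ℕ∞)) 𝒲 h𝒲
end
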